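/- arXiv:1902.02742 — 7 statements merged into one kernel-verified Lean document; each statement's English description precedes it below -/
import Mathlib

section
/- Let n ≥ 1, let a_1,…,a_n be nonnegative integers with a_1+⋯+a_n = A, let t_1,…,t_n be nonnegative integers with t_1+⋯+t_n = T, let B be an integer, and let (p_1,…,p_n) ∈ {0,1}^n be a vector of parities. Then ∑_{f_1+⋯+f_n=B, f_i ≥ 0, f_i ≡ p_i (mod 2)} ∏_{i=1}^n C(2a_i, f_i)·(f_i)_{t_i} = ∑_{f_1+⋯+f_n = 2A−B+T, f_i ≥ 0, f_i ≡ p_i + t_i (mod 2)} ∏_{i=1}^n C(2a_i, f_i)·(f_i)_{t_i}. -/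
open Finset

/-- Descending Pochhammer symbol `(x)_t = x (x-1) ⋯ (x - t + 1)`. -/
def descPoch (x : ℤ) (t : ℕ) : ℤ := ∏ i ∈ Finset.range t, (x - i)

/-- The sum `∑_{f_1+⋯+f_n=B, f_i ≥ 0, f_i ≡ p_i (mod 2)} ∏_i C(2a_i, f_i) (f_i)_{t_i}`. -/
def sumS (n : ℕ) (a t : Fin n → ℕ) (p : Fin n → ZMod 2) (B : ℤ) : ℤ :=
  ∑ f ∈ (Finset.Nat.antidiagonalTuple n B.toNat).filter
      (fun f => (∑ j, (f j : ℤ)) = B ∧ ∀ j, (f j : ZMod 2) = p j),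
    ∏ j, (Nat.choose (2 * a j) (f j) : ℤ) * descPoch (f j) (t j)

lemma descPoch_natCast (f t : ℕ) (h : t ≤ f) :
    descPoch (f : ℤ) t = (f.descFactorial t : ℤ) := by
  rw [Nat.descFactorial_eq_prod_range, descPoch, Nat.cast_prod]
  refine Finset.prod_congr rfl fun i hi => ?_
  rw [Finset.mem_range] at hi
  rw [Nat.cast_sub (by omega)]

lemma descPoch_zero_of_lt (f t : ℕ) (h : f < t) : descPoch (f : ℤ) t = 0 :=
  Finset.prod_eq_zero (Finset.mem_range.mpr h) (by simp)

lemma key_nat (m f t : ℕ) (h1 : t ≤ f) (h2 : f ≤ m) :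
    m.choose f * f.descFactorial t
      = m.choose (m + t - f) * (m + t - f).descFactorial t := by
  set g := m + t - f with hg
  have hgt : t ≤ g := by omega
  have hgm : g ≤ m := by omega
  have h3 : g - t = m - f := by omega
  have h4 : m - g = f - t := by omega
  have e1 : m.choose f * f.descFactorial t
      * (Nat.factorial (f - t) * Nat.factorial (m - f)) = Nat.factorial m := by
    have : m.choose f * f.descFactorial t
        * (Nat.factorial (f - t) * Nat.factorial (m - f))
        = m.choose f * (Nat.factorial (f - t) * f.descFactorial t)
          * Nat.factorial (m - f) := by ring
    rw [this, Nat.factorial_mul_descFactorial h1,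
      Nat.choose_mul_factorial_mul_factorial h2]
  have e2 : m.choose g * g.descFactorial t
      * (Nat.factorial (f - t) * Nat.factorial (m - f)) = Nat.factorial m := by
    have : m.choose g * g.descFactorial t
        * (Nat.factorial (f - t) * Nat.factorial (m - f))
        = m.choose g * (Nat.factorial (g - t) * g.descFactorial t)
          * Nat.factorial (m - g) := by
      rw [h3, h4]; ring
    rw [this, Nat.factorial_mul_descFactorial hgt,
      Nat.choose_mul_factorial_mul_factorial hgm]
  exact Nat.eq_of_mul_eq_mul_right
    (Nat.mul_pos (Nat.factorial_pos _) (Nat.factorial_pos _)) (e1.trans e2.symm)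

lemma key_int (m f t : ℕ) (h1 : t ≤ f) (h2 : f ≤ m) :
    (m.choose f : ℤ) * descPoch (f : ℤ) t
      = (m.choose (m + t - f) : ℤ) * descPoch ((m + t - f : ℕ) : ℤ) t := by
  rw [descPoch_natCast _ _ h1, descPoch_natCast _ _ (by omega)]
  exact_mod_cast key_nat m f t h1 h2

lemma bounds_of_ne_zero {n : ℕ} (a t : Fin n → ℕ) (f : Fin n → ℕ)
    (h : (∏ j, (Nat.choose (2 * a j) (f j) : ℤ) * descPoch (f j) (t j)) ≠ 0)
    (j : Fin n) : t j ≤ f j ∧ f j ≤ 2 * a j := by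
  have hj := Finset.prod_ne_zero_iff.mp h j (Finset.mem_univ j)
  rw [mul_ne_zero_iff] at hj
  constructor
  · by_contra hlt
    push_neg at hlt
    exact hj.2 (descPoch_zero_of_lt _ _ hlt)
  · by_contra hlt
    push_neg at hlt
    have hz : (2 * a j).choose (f j) = 0 := Nat.choose_eq_zero_of_lt hlt
    exact hj.1 (by exact_mod_cast hz)

theorem statement1 (n : ℕ) (hn : 1 ≤ n) (a t : Fin n → ℕ) (p : Fin n → ZMod 2) (B : ℤ) :
    sumS n a t p B
      = sumS n a t (fun j => p j + (t j : ZMod 2))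
          (2 * (∑ j, (a j : ℤ)) - B + ∑ j, (t j : ℤ)) := by
  classical
  set B' : ℤ := 2 * (∑ j, (a j : ℤ)) - B + ∑ j, (t j : ℤ) with hB'
  unfold sumS
  refine Finset.sum_bij_ne_zero (fun f _ _ => fun j => 2 * a j + t j - f j)
    ?_ ?_ ?_ ?_
  · -- membership
    intro f hf hne
    rw [Finset.mem_filter] at hf
    obtain ⟨hf1, hfs, hfp⟩ := hf
    have hb := bounds_of_ne_zero a t f hne
    have hsum : ∀ j, ((2 * a j + t j - f j : ℕ) : ℤ) = 2 * a j + t j - f j := by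
      intro j
      have h1 := (hb j).1; have h2 := (hb j).2
      have : f j ≤ 2 * a j + t j := by omega
      push_cast [Nat.cast_sub this]
      ring
    have hZsum : (∑ j, ((2 * a j + t j - f j : ℕ) : ℤ)) = B' := by
      rw [Finset.sum_congr rfl (fun j _ => hsum j)]
      rw [hB', ← hfs]
      rw [Finset.sum_sub_distrib, Finset.sum_add_distrib]
      push_cast
      rw [Finset.mul_sum]
      ring
    rw [Finset.mem_filter]
    refine ⟨?_, hZsum, ?_⟩
    · rw [Finset.Nat.mem_antidiagonalTuple]
      have hc : ((∑ j, (2 * a j + t j - f j) : ℕ) : ℤ) = B' := by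
        rw [Nat.cast_sum]; exact hZsum
      rw [← hc, Int.toNat_natCast]
    · intro j
      show ((2 * a j + t j - f j : ℕ) : ZMod 2) = p j + (t j : ZMod 2)
      have h1 : (2 * a j + t j - f j) + f j = 2 * a j + t j := by
        have := (hb j).2; omega
      have h2 := congrArg (Nat.cast : ℕ → ZMod 2) h1
      push_cast at h2
      rw [hfp j] at h2
      have hz : (2 : ZMod 2) * (a j : ZMod 2) = 0 := by
        rw [show (2 : ZMod 2) = 0 from rfl, zero_mul]
      rw [hz, zero_add] at h2
      have h3 : ((2 * a j + t j - f j : ℕ) : ZMod 2) = (t j : ZMod 2) - p j :=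
        eq_sub_of_add_eq h2
      rw [h3, CharTwo.sub_eq_add, add_comm]
  · -- injectivity
    intro f₁ h₁₁ h₁₂ f₂ h₂₁ h₂₂ heq
    have hb₁ := bounds_of_ne_zero a t f₁ h₁₂
    have hb₂ := bounds_of_ne_zero a t f₂ h₂₂
    funext j
    have h := congrFun heq j
    have h : 2 * a j + t j - f₁ j = 2 * a j + t j - f₂ j := h
    have := (hb₁ j).2
    have := (hb₂ j).2
    omega
  · -- surjectivity
    intro g hg hne
    rw [Finset.mem_filter] at hg
    obtain ⟨hg1, hgs, hgp⟩ := hg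
    have hb := bounds_of_ne_zero a t g hne
    refine ⟨fun j => 2 * a j + t j - g j, ?_, ?_, ?_⟩
    · -- membership in source
      have hsum : ∀ j, ((2 * a j + t j - g j : ℕ) : ℤ) = 2 * a j + t j - g j := by
        intro j
        have h1 := (hb j).1; have h2 := (hb j).2
        have : g j ≤ 2 * a j + t j := by omega
        push_cast [Nat.cast_sub this]
        ring
      have hZsum : (∑ j, ((2 * a j + t j - g j : ℕ) : ℤ)) = B := by
        rw [Finset.sum_congr rfl (fun j _ => hsum j)]
        have hBB : B = 2 * (∑ j, (a j : ℤ)) + (∑ j, (t j : ℤ)) - B' := by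
          rw [hB']; ring
        rw [hBB, ← hgs]
        rw [Finset.sum_sub_distrib, Finset.sum_add_distrib]
        push_cast
        rw [Finset.mul_sum]
        try ring
      rw [Finset.mem_filter]
      refine ⟨?_, hZsum, ?_⟩
      · rw [Finset.Nat.mem_antidiagonalTuple]
        have hc : ((∑ j, (2 * a j + t j - g j) : ℕ) : ℤ) = B := by
          rw [Nat.cast_sum]; exact hZsum
        omega
      · intro j
        have h1 : (2 * a j + t j - g j) + g j = 2 * a j + t j := by
          have := (hb j).2; omega
        have h2 := congrArg (Nat.cast : ℕ → ZMod 2) h1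
        push_cast at h2
        rw [hgp j] at h2
        have hz : (2 : ZMod 2) * (a j : ZMod 2) = 0 := by
          rw [show (2 : ZMod 2) = 0 from rfl, zero_mul]
        rw [hz, zero_add] at h2
        have h3 : ((2 * a j + t j - g j : ℕ) : ZMod 2)
            = (t j : ZMod 2) - (p j + (t j : ZMod 2)) := eq_sub_of_add_eq h2
        rw [h3, show (t j : ZMod 2) - (p j + (t j : ZMod 2)) = -(p j) from by ring,
          CharTwo.neg_eq]
    · -- nonzero term at preimage
      have hterm : ∀ j, ((2 * a j).choose (2 * a j + t j - g j) : ℤ)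
            * descPoch ((2 * a j + t j - g j : ℕ) : ℤ) (t j)
          = ((2 * a j).choose (g j) : ℤ) * descPoch ((g j : ℕ) : ℤ) (t j) := by
        intro j
        have h1 := (hb j).1
        have h2 := (hb j).2
        have hf1 : t j ≤ 2 * a j + t j - g j := by omega
        have hf2 : 2 * a j + t j - g j ≤ 2 * a j := by omega
        have hk := key_int (2 * a j) (2 * a j + t j - g j) (t j) hf1 hf2
        have hgg : 2 * a j + t j - (2 * a j + t j - g j) = g j := by omega
        rw [hgg] at hk
        exact hk
      rw [Finset.prod_congr rfl (fun j _ => hterm j)]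
      exact hne
    · -- the map applied to preimage gives g
      funext j
      have := (hb j).2
      simp only
      omega
  · -- term equality
    intro f h₁ h₂
    have hb := bounds_of_ne_zero a t f h₂
    refine Finset.prod_congr rfl fun j _ => ?_
    exact key_int (2 * a j) (f j) (t j) (hb j).1 (hb j).2
end

section
/- Let g ≥ 2 and n ≥ 1 be integers and let a_1,…,a_n be nonnegative integers with a_1+⋯+a_n = 2g−3+n. Then ∑_{(o_1,…,o_n)} ∏_{j=1}^n C(2a_j, o_j) taken over n-tuples of positive odd integers with o_1+⋯+o_n = 2g−4+n equals ∑_{(o_1,…,o_n)} ∏_{j=1}^n C(2a_j, o_j) taken over n-tuples of positive odd integers with o_1+⋯+o_n = 2g−2+n. -/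
open Finset

/-- `∑_{(o_1,…,o_n) positive odd, o_1+⋯+o_n = M} ∏_j C(2a_j, o_j)`. -/
def oddSum (n M : ℕ) (a : Fin n → ℕ) : ℤ :=
  ∑ o ∈ (Finset.Nat.antidiagonalTuple n M).filter (fun o => ∀ j, Odd (o j)),
    ∏ j, (Nat.choose (2 * a j) (o j) : ℤ)

theorem statement3 (g n : ℕ) (hg : 2 ≤ g) (hn : 1 ≤ n) (a : Fin n → ℕ)
    (ha : ∑ j, a j = 2 * g - 3 + n) :
    oddSum n (2 * g - 4 + n) a = oddSum n (2 * g - 2 + n) a := by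
  classical
  have trunc : ∀ M : ℕ, oddSum n M a =
      ∑ o ∈ (Finset.Nat.antidiagonalTuple n M).filter
        (fun o => (∀ j, Odd (o j)) ∧ ∀ j, o j ≤ 2 * a j),
        ∏ j, (Nat.choose (2 * a j) (o j) : ℤ) := by
    intro M
    rw [oddSum]
    symm
    apply Finset.sum_subset
    · intro o ho
      simp only [Finset.mem_filter] at ho ⊢
      exact ⟨ho.1, ho.2.1⟩
    · intro o ho hno
      simp only [Finset.mem_filter] at ho hno
      push_neg at hno
      obtain ⟨j, hj⟩ := hno ho.1 ho.2
      exact Finset.prod_eq_zero (Finset.mem_univ j) (by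
        norm_cast
        exact Nat.choose_eq_zero_of_lt hj)
  have hA : ∑ j, 2 * a j = (2 * g - 4 + n) + (2 * g - 2 + n) := by
    rw [← Finset.mul_sum, ha]; omega
  rw [trunc, trunc]
  apply Finset.sum_nbij' (i := fun o => fun j => 2 * a j - o j)
    (j := fun o => fun j => 2 * a j - o j)
  · intro o ho
    simp only [Finset.mem_filter, Finset.Nat.mem_antidiagonalTuple] at ho ⊢
    obtain ⟨hsum, hodd, hle⟩ := ho
    refine ⟨?_, ?_, fun j => Nat.sub_le _ _⟩
    · have := Finset.sum_tsub_distrib (f := fun j => 2 * a j) (g := o)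
        (s := Finset.univ) (fun j _ => hle j)
      rw [this, hsum, hA]
      omega
    · intro j
      exact Nat.Even.sub_odd (hle j) (even_two_mul _) (hodd j)
  · intro o ho
    simp only [Finset.mem_filter, Finset.Nat.mem_antidiagonalTuple] at ho ⊢
    obtain ⟨hsum, hodd, hle⟩ := ho
    refine ⟨?_, ?_, fun j => Nat.sub_le _ _⟩
    · have := Finset.sum_tsub_distrib (f := fun j => 2 * a j) (g := o)
        (s := Finset.univ) (fun j _ => hle j)
      rw [this, hsum, hA]
      omega
    · intro j
      exact Nat.Even.sub_odd (hle j) (even_two_mul _) (hodd j)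
  · intro o ho
    simp only [Finset.mem_filter] at ho
    funext j
    exact Nat.sub_sub_self (ho.2.2 j)
  · intro o ho
    simp only [Finset.mem_filter] at ho
    funext j
    exact Nat.sub_sub_self (ho.2.2 j)
  · intro o ho
    simp only [Finset.mem_filter] at ho
    apply Finset.prod_congr rfl
    intro j _
    norm_cast
    exact (Nat.choose_symm (ho.2.2 j)).symm
end

section
/- Let g ≥ 2 and n ≥ 2 be integers and let a_1,…,a_{n−1} be arbitrary nonnegative integers (no condition on their sum). Then P_{g,n}(a_1,…,a_{n−1}, 0) = 0. -/
open Finset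

/-- Ordered `k`-tuples of pairwise disjoint nonempty subsets of `{1,…,n}` with union `{1,…,n}`. -/
def Parts (n k : ℕ) : Finset (Fin k → Finset (Fin n)) :=
  Finset.univ.filter fun I =>
    (∀ j, I j ≠ ∅) ∧ (∀ j j', j ≠ j' → Disjoint (I j) (I j')) ∧
      Finset.univ.biUnion I = Finset.univ

/-- The double factorial ratio `(2d-1)!! / (2d+1-2c)!! = ∏_{i=1}^{c-1} (2d+1-2i)`. -/
def dfRatio (d c : ℕ) : ℤ := ∏ i ∈ Finset.range (c - 1), (2 * (d : ℤ) + 1 - 2 * (i + 1))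

/-- The polynomial `P_{g,n}(a_1,…,a_n)` of the paper. -/
def Pgn (g n : ℕ) (a : Fin n → ℕ) : ℚ :=
  ∑ k ∈ Finset.Icc 1 n,
    ((-1) ^ k * (Nat.factorial (2 * g - 3 + k) : ℚ) / (Nat.factorial k : ℚ)) *
      ∑ I ∈ Parts n k,
        ∑ d ∈ Finset.Nat.antidiagonalTuple k (g - 2 + n),
          ∏ j, ((Nat.choose (2 * (∑ ℓ ∈ I j, a ℓ) + 1) (2 * d j) : ℚ) *
            (dfRatio (d j) (I j).card : ℚ))

namespace S4

def emb (n : ℕ) : Fin n ↪ Fin (n + 1) := ⟨Fin.castSucc, Fin.castSucc_injective n⟩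

def base {n : ℕ} (a : Fin n → ℕ) (c : Finset (Fin n)) (m : ℕ) : ℚ :=
  (Nat.choose (2 * (∑ ℓ ∈ c, a ℓ) + 1) (2 * m) : ℚ) * (dfRatio m c.card : ℚ)

variable {n k : ℕ}

lemma mem_parts {I : Fin k → Finset (Fin n)} :
    I ∈ Parts n k ↔ (∀ j, I j ≠ ∅) ∧ (∀ j j', j ≠ j' → Disjoint (I j) (I j')) ∧
      Finset.univ.biUnion I = Finset.univ := by
  simp [Parts]

lemma sum_card {I : Fin k → Finset (Fin n)} (hI : I ∈ Parts n k) :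
    ∑ j, (I j).card = n := by
  rw [mem_parts] at hI
  have := Finset.card_biUnion (s := (univ : Finset (Fin k))) (t := I)
    (fun x _ y _ h => hI.2.1 x y h)
  rw [hI.2.2] at this
  simpa using this.symm

lemma parts_nk_empty (h : n < k) : Parts n k = ∅ := by
  rw [Finset.eq_empty_iff_forall_notMem]
  intro I hI
  have h1 := sum_card hI
  have h2 : ∀ j, 1 ≤ (I j).card := fun j =>
    Finset.card_pos.2 (Finset.nonempty_iff_ne_empty.2 ((mem_parts.1 hI).1 j))
  have : k ≤ n := by
    calc k = ∑ _j : Fin k, 1 := by simp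
    _ ≤ ∑ j, (I j).card := Finset.sum_le_sum fun j _ => h2 j
    _ = n := h1
  omega

lemma parts_n0_empty (h : 1 ≤ n) : Parts n 0 = ∅ := by
  rw [Finset.eq_empty_iff_forall_notMem]
  intro I hI
  have h1 := sum_card hI
  simp at h1
  omega

lemma dfRatio_succ (m c : ℕ) (hc : 1 ≤ c) :
    dfRatio m (c + 1) = dfRatio m c * (2 * m + 1 - 2 * c) := by
  unfold dfRatio
  rw [show c + 1 - 1 = (c - 1) + 1 by omega, Finset.prod_range_succ]
  congr 1
  omega

lemma last_not_mem_map (S : Finset (Fin n)) : Fin.last n ∉ S.map (emb n) := by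
  simp only [Finset.mem_map]
  rintro ⟨y, -, h⟩
  exact absurd h (Fin.castSucc_lt_last y).ne

lemma base_map (a : Fin n → ℕ) (c : Finset (Fin n)) (m : ℕ) :
    base (Fin.snoc a 0) (c.map (emb n)) m = base a c m := by
  have h1 : (∑ ℓ ∈ c.map (emb n), (Fin.snoc a 0 : Fin (n+1) → ℕ) ℓ) = ∑ ℓ ∈ c, a ℓ := by
    rw [Finset.sum_map]
    refine Finset.sum_congr rfl fun x _ => ?_
    show (Fin.snoc a 0 : Fin (n+1) → ℕ) x.castSucc = a x
    rw [Fin.snoc_castSucc]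
  unfold base
  rw [h1, Finset.card_map]

lemma base_singleton (a : Fin n → ℕ) (m : ℕ) :
    base (Fin.snoc a 0) {Fin.last n} m = (Nat.choose 1 (2 * m) : ℚ) := by
  unfold base
  simp [dfRatio, Fin.snoc_last]

lemma base_insert (a : Fin n → ℕ) (c : Finset (Fin n)) (hc : c.Nonempty) (m : ℕ) :
    base (Fin.snoc a 0) (insert (Fin.last n) (c.map (emb n))) m
      = (2 * m + 1 - 2 * c.card : ℚ) * base a c m := by
  have hlast := last_not_mem_map (n := n) c
  unfold base
  rw [Finset.sum_insert hlast, Finset.card_insert_of_notMem hlast, Finset.sum_map,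
    Finset.card_map]
  have h1 : (∑ x ∈ c, (Fin.snoc a 0 : Fin (n+1) → ℕ) ((emb n) x)) = ∑ ℓ ∈ c, a ℓ := by
    refine Finset.sum_congr rfl fun x _ => ?_
    show (Fin.snoc a 0 : Fin (n+1) → ℕ) x.castSucc = a x
    rw [Fin.snoc_castSucc]
  rw [show (Fin.snoc a 0 : Fin (n+1) → ℕ) (Fin.last n) = 0 from Fin.snoc_last _ _, h1,
    dfRatio_succ m c.card (Finset.card_pos.2 hc)]
  push_cast
  ring

lemma map_preimage (S : Finset (Fin (n + 1))) (hS : Fin.last n ∉ S) :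
    (S.preimage (emb n) ((emb n).injective.injOn)).map (emb n) = S := by
  ext x
  simp only [Finset.mem_map, Finset.mem_preimage]
  constructor
  · rintro ⟨y, hy, rfl⟩; exact hy
  · intro hx
    have hx' : x ≠ Fin.last n := fun h => hS (h ▸ hx)
    refine ⟨x.castPred hx', ?_, ?_⟩ <;>
      simp [emb, Fin.castSucc_castPred, hx]


lemma dsum (D : ℕ) (j : Fin (k + 1)) (g : Fin k → ℕ → ℚ) :
    ∑ d ∈ Finset.Nat.antidiagonalTuple (k + 1) D,
      (Nat.choose 1 (2 * d j) : ℚ) * ∏ i, g i (d (j.succAbove i))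
    = ∑ e ∈ Finset.Nat.antidiagonalTuple k D, ∏ i, g i (e i) := by
  rw [← Finset.sum_filter_of_ne (s := Finset.Nat.antidiagonalTuple (k + 1) D)
    (p := fun d => d j = 0)
    (f := fun d => (Nat.choose 1 (2 * d j) : ℚ) * ∏ i, g i (d (j.succAbove i)))]
  · refine Finset.sum_nbij' (fun d i => d (j.succAbove i)) (fun e => j.insertNth 0 e)
      ?_ ?_ ?_ ?_ ?_
    · intro d hd
      rw [Finset.mem_filter, Finset.Nat.mem_antidiagonalTuple] at hd
      show (fun i => d (j.succAbove i)) ∈ _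
      rw [Finset.Nat.mem_antidiagonalTuple]
      have h := Fin.sum_univ_succAbove d j
      omega
    · intro e he
      rw [Finset.Nat.mem_antidiagonalTuple] at he
      show Fin.insertNth (α := fun _ => ℕ) j 0 e ∈ _
      rw [Finset.mem_filter, Finset.Nat.mem_antidiagonalTuple]
      refine ⟨?_, by rw [Fin.insertNth_apply_same]⟩
      rw [Fin.sum_univ_succAbove _ j, Fin.insertNth_apply_same]
      simp only [Fin.insertNth_apply_succAbove]
      omega
    · intro d hd
      rw [Finset.mem_filter] at hd
      show j.insertNth 0 (fun i => d (j.succAbove i)) = d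
      funext x
      rcases eq_or_ne x j with rfl | hx
      · rw [Fin.insertNth_apply_same, hd.2]
      · obtain ⟨i, rfl⟩ := Fin.exists_succAbove_eq hx
        rw [Fin.insertNth_apply_succAbove]
    · intro e he
      funext i
      exact Fin.insertNth_apply_succAbove (α := fun _ => ℕ) j 0 e i
    · intro d hd
      rw [Finset.mem_filter] at hd
      simp only [hd.2]
      norm_num
  · intro d _ hne
    by_contra h
    apply hne
    have hc : Nat.choose 1 (2 * d j) = 0 := Nat.choose_eq_zero_of_lt (by omega)
    simp only [hc]
    push_cast
    ring

/-- The map for case A: insert the singleton block `{last}` at position `j`. -/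
def phiA (n k : ℕ) (p : Fin (k + 1) × (Fin k → Finset (Fin n))) :
    Fin (k + 1) → Finset (Fin (n + 1)) :=
  p.1.insertNth {Fin.last n} (fun i => (p.2 i).map (emb n))

lemma phiA_mem (p : Fin (k + 1) × (Fin k → Finset (Fin n)))
    (hp : p.2 ∈ Parts n k) :
    phiA n k p ∈ (Parts (n + 1) (k + 1)).filter
      (fun I => ∃ j, I j = {Fin.last n}) := by
  obtain ⟨j, I⟩ := p
  obtain ⟨hne, hdisj, hun⟩ := mem_parts.1 hp
  rw [Finset.mem_filter, mem_parts]
  refine ⟨⟨?_, ?_, ?_⟩, ⟨j, Fin.insertNth_apply_same _ _ _⟩⟩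
  · intro x
    rcases eq_or_ne x j with rfl | hx
    · rw [phiA, Fin.insertNth_apply_same]
      exact Finset.singleton_ne_empty _
    · obtain ⟨i, rfl⟩ := Fin.exists_succAbove_eq hx
      rw [phiA, Fin.insertNth_apply_succAbove]
      simp only [ne_eq, Finset.map_eq_empty]
      exact hne i
  · intro x y hxy
    rcases eq_or_ne x j with rfl | hx
    · obtain ⟨i, rfl⟩ := Fin.exists_succAbove_eq (Ne.symm hxy)
      rw [phiA, Fin.insertNth_apply_same, Fin.insertNth_apply_succAbove]
      rw [Finset.disjoint_singleton_left]
      exact last_not_mem_map _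
    · obtain ⟨i, rfl⟩ := Fin.exists_succAbove_eq hx
      rcases eq_or_ne y j with rfl | hy
      · rw [phiA, Fin.insertNth_apply_same, Fin.insertNth_apply_succAbove]
        rw [Finset.disjoint_singleton_right]
        exact last_not_mem_map _
      · obtain ⟨i', rfl⟩ := Fin.exists_succAbove_eq hy
        rw [phiA, Fin.insertNth_apply_succAbove, Fin.insertNth_apply_succAbove]
        rw [Finset.disjoint_map]
        exact hdisj i i' (fun h => hxy (by rw [h]))
  · rw [Finset.eq_univ_iff_forall]
    intro x
    rw [Finset.mem_biUnion]
    induction x using Fin.lastCases with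
    | last =>
      exact ⟨j, Finset.mem_univ _, by
        rw [phiA, Fin.insertNth_apply_same]; exact Finset.mem_singleton_self _⟩
    | cast y =>
      have : y ∈ Finset.univ.biUnion I := by rw [hun]; exact Finset.mem_univ y
      obtain ⟨i, -, hi⟩ := Finset.mem_biUnion.1 this
      refine ⟨j.succAbove i, Finset.mem_univ _, ?_⟩
      rw [phiA, Fin.insertNth_apply_succAbove]
      exact Finset.mem_map_of_mem _ hi

lemma phiA_inj (p q : Fin (k + 1) × (Fin k → Finset (Fin n)))
    (hp : p.2 ∈ Parts n k) (hq : q.2 ∈ Parts n k)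
    (h : phiA n k p = phiA n k q) : p = q := by
  obtain ⟨j, I⟩ := p
  obtain ⟨j', I'⟩ := q
  have hj : j = j' := by
    by_contra hne
    obtain ⟨i, hi⟩ := Fin.exists_succAbove_eq hne
    have h1 : phiA n k (j', I') j = (I' i).map (emb n) := by
      rw [phiA, ← hi, Fin.insertNth_apply_succAbove]
    have h2 : phiA n k (j, I) j = {Fin.last n} := Fin.insertNth_apply_same _ _ _
    rw [h, h1] at h2
    have hlm := last_not_mem_map (n := n) (I' i)
    rw [h2] at hlm
    exact hlm (Finset.mem_singleton_self _)
  subst hj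
  have : I = I' := by
    funext i
    have := congrFun h (j.succAbove i)
    rw [phiA, phiA] at this
    simp only [Fin.insertNth_apply_succAbove] at this
    exact Finset.map_injective (emb n) this
  rw [this]

lemma phiA_surj (I' : Fin (k + 1) → Finset (Fin (n + 1)))
    (hI' : I' ∈ (Parts (n + 1) (k + 1)).filter (fun I => ∃ j, I j = {Fin.last n})) :
    ∃ p : Fin (k + 1) × (Fin k → Finset (Fin n)),
      p.2 ∈ Parts n k ∧ phiA n k p = I' := by
  rw [Finset.mem_filter] at hI'
  obtain ⟨hP, j, hj⟩ := hI'
  obtain ⟨hne, hdisj, hun⟩ := mem_parts.1 hP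
  have hnl : ∀ i : Fin k, Fin.last n ∉ I' (j.succAbove i) := by
    intro i hmem
    have hd := hdisj _ _ (Fin.succAbove_ne j i)
    rw [hj] at hd
    exact (Finset.disjoint_singleton_right.1 hd) hmem
  set I : Fin k → Finset (Fin n) :=
    fun i => (I' (j.succAbove i)).preimage (emb n) ((emb n).injective.injOn) with hI
  have hmap : ∀ i, (I i).map (emb n) = I' (j.succAbove i) := fun i =>
    map_preimage _ (hnl i)
  refine ⟨⟨j, I⟩, mem_parts.2 ⟨?_, ?_, ?_⟩, ?_⟩
  · intro i h
    have h' : I i = ∅ := h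
    have := hmap i
    rw [h'] at this
    simp only [Finset.map_empty] at this
    exact hne _ this.symm
  · intro x y hxy
    have hd := hdisj (j.succAbove x) (j.succAbove y)
      (fun h => hxy (Fin.succAbove_right_injective (p := j) h))
    rw [← hmap x, ← hmap y, Finset.disjoint_map] at hd
    exact hd
  · rw [Finset.eq_univ_iff_forall]
    intro y
    have : (Fin.castSucc y) ∈ Finset.univ.biUnion I' := by
      rw [hun]; exact Finset.mem_univ _
    obtain ⟨i0, -, hi0⟩ := Finset.mem_biUnion.1 this
    have hi0j : i0 ≠ j := by
      rintro rfl
      rw [hj, Finset.mem_singleton] at hi0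
      exact absurd hi0 (Fin.castSucc_lt_last y).ne
    obtain ⟨i, rfl⟩ := Fin.exists_succAbove_eq hi0j
    rw [Finset.mem_biUnion]
    refine ⟨i, Finset.mem_univ _, ?_⟩
    rw [hI]
    rw [Finset.mem_preimage]
    exact hi0
  · funext x
    rcases eq_or_ne x j with rfl | hx
    · rw [phiA, Fin.insertNth_apply_same, hj]
    · obtain ⟨i, rfl⟩ := Fin.exists_succAbove_eq hx
      rw [phiA, Fin.insertNth_apply_succAbove]
      exact hmap i

lemma lemA (D : ℕ) (a : Fin n → ℕ) :
    ∑ I ∈ (Parts (n + 1) (k + 1)).filter (fun I => ∃ j, I j = {Fin.last n}),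
      ∑ d ∈ Finset.Nat.antidiagonalTuple (k + 1) D,
        ∏ j, base (Fin.snoc a 0) (I j) (d j)
    = (k + 1 : ℚ) * ∑ I ∈ Parts n k,
        ∑ e ∈ Finset.Nat.antidiagonalTuple k D, ∏ i, base a (I i) (e i) := by
  have step1 :
      ∑ I ∈ (Parts (n + 1) (k + 1)).filter (fun I => ∃ j, I j = {Fin.last n}),
        ∑ d ∈ Finset.Nat.antidiagonalTuple (k + 1) D,
          ∏ j, base (Fin.snoc a 0) (I j) (d j)
      = ∑ p ∈ (Finset.univ : Finset (Fin (k + 1))) ×ˢ Parts n k,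
          ∑ e ∈ Finset.Nat.antidiagonalTuple k D, ∏ i, base a (p.2 i) (e i) := by
    rw [eq_comm]
    refine Finset.sum_bij (fun p _ => phiA n k p) ?_ ?_ ?_ ?_
    · intro p hp
      exact phiA_mem p (Finset.mem_product.1 hp).2
    · intro p hp q hq h
      exact phiA_inj p q (Finset.mem_product.1 hp).2 (Finset.mem_product.1 hq).2 h
    · intro I' hI'
      obtain ⟨p, hp, hpI⟩ := phiA_surj I' hI'
      exact ⟨p, Finset.mem_product.2 ⟨Finset.mem_univ _, hp⟩, hpI⟩
    · intro p hp
      obtain ⟨j, I⟩ := p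
      rw [← dsum D j (fun i m => base a (I i) m)]
      refine Finset.sum_congr rfl fun d _ => ?_
      rw [Fin.prod_univ_succAbove (fun x => base (Fin.snoc a 0) (phiA n k (j, I) x) (d x)) j]
      have h1 : phiA n k (j, I) j = {Fin.last n} := Fin.insertNth_apply_same _ _ _
      rw [h1, base_singleton]
      congr 1
      refine Finset.prod_congr rfl fun i _ => ?_
      have h2 : phiA n k (j, I) (j.succAbove i) = (I i).map (emb n) := by
        rw [phiA, Fin.insertNth_apply_succAbove]
      rw [h2, base_map]
  rw [step1, Finset.sum_product]
  have hx : ∑ x : Fin (k + 1), ∑ y ∈ Parts n k, ∑ e ∈ Finset.Nat.antidiagonalTuple k D,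
      ∏ i, base a ((x, y).2 i) (e i)
      = ∑ _x : Fin (k + 1), ∑ I ∈ Parts n k, ∑ e ∈ Finset.Nat.antidiagonalTuple k D,
        ∏ i, base a (I i) (e i) := rfl
  rw [hx, Finset.sum_const, Finset.card_univ, Fintype.card_fin, nsmul_eq_mul]
  push_cast
  ring

/-- The map for case B: add `last` to block `j`. -/
def phiB (n k : ℕ) (p : Fin k × (Fin k → Finset (Fin n))) :
    Fin k → Finset (Fin (n + 1)) :=
  fun i => if i = p.1 then insert (Fin.last n) ((p.2 i).map (emb n))
    else (p.2 i).map (emb n)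

lemma phiB_mem (p : Fin k × (Fin k → Finset (Fin n))) (hp : p.2 ∈ Parts n k) :
    phiB n k p ∈ (Parts (n + 1) k).filter
      (fun I => ¬ ∃ j, I j = {Fin.last n}) := by
  obtain ⟨j, I⟩ := p
  obtain ⟨hne, hdisj, hun⟩ := mem_parts.1 hp
  have hBj : phiB n k (j, I) j = insert (Fin.last n) ((I j).map (emb n)) := by
    rw [phiB, if_pos rfl]
  have hBo : ∀ i, i ≠ j → phiB n k (j, I) i = (I i).map (emb n) := by
    intro i hi
    rw [phiB, if_neg hi]
  rw [Finset.mem_filter, mem_parts]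
  refine ⟨⟨?_, ?_, ?_⟩, ?_⟩
  · intro i
    rcases eq_or_ne i j with rfl | hi
    · rw [hBj]; exact Finset.insert_ne_empty _ _
    · rw [hBo i hi]
      simp only [ne_eq, Finset.map_eq_empty]
      exact hne i
  · intro x y hxy
    rcases eq_or_ne x j with rfl | hx
    · rw [hBj, hBo y (Ne.symm hxy)]
      rw [Finset.disjoint_insert_left]
      exact ⟨last_not_mem_map _, Finset.disjoint_map _ |>.2 (hdisj _ _ hxy)⟩
    · rcases eq_or_ne y j with rfl | hy
      · rw [hBj, hBo x hx]
        rw [Finset.disjoint_insert_right]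
        exact ⟨last_not_mem_map _, Finset.disjoint_map _ |>.2 (hdisj _ _ hxy)⟩
      · rw [hBo x hx, hBo y hy]
        exact Finset.disjoint_map _ |>.2 (hdisj _ _ hxy)
  · rw [Finset.eq_univ_iff_forall]
    intro x
    rw [Finset.mem_biUnion]
    induction x using Fin.lastCases with
    | last =>
      exact ⟨j, Finset.mem_univ _, by rw [hBj]; exact Finset.mem_insert_self _ _⟩
    | cast y =>
      have : y ∈ Finset.univ.biUnion I := by rw [hun]; exact Finset.mem_univ y
      obtain ⟨i, -, hi⟩ := Finset.mem_biUnion.1 this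
      refine ⟨i, Finset.mem_univ _, ?_⟩
      have hmem : (Fin.castSucc y) ∈ (I i).map (emb n) := Finset.mem_map_of_mem _ hi
      rcases eq_or_ne i j with rfl | hij
      · rw [hBj]; exact Finset.mem_insert_of_mem hmem
      · rw [hBo i hij]; exact hmem
  · rintro ⟨j', hj'⟩
    rcases eq_or_ne j' j with rfl | hj
    · rw [hBj] at hj'
      have hsub : (I j').map (emb n) ⊆ {Fin.last n} := by
        rw [← hj']; exact Finset.subset_insert _ _
      obtain ⟨y, hy⟩ := Finset.nonempty_iff_ne_empty.2 (hne j')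
      have := hsub (Finset.mem_map_of_mem (emb n) hy)
      rw [Finset.mem_singleton] at this
      exact absurd this (Fin.castSucc_lt_last y).ne
    · rw [hBo j' hj] at hj'
      have := last_not_mem_map (n := n) (I j')
      rw [hj'] at this
      exact this (Finset.mem_singleton_self _)

lemma phiB_inj (p q : Fin k × (Fin k → Finset (Fin n)))
    (hp : p.2 ∈ Parts n k) (hq : q.2 ∈ Parts n k)
    (h : phiB n k p = phiB n k q) : p = q := by
  obtain ⟨j, I⟩ := p
  obtain ⟨j', I'⟩ := q
  have hj : j = j' := by
    by_contra hne
    have h1 : Fin.last n ∈ phiB n k (j, I) j := by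
      rw [phiB, if_pos rfl]; exact Finset.mem_insert_self _ _
    rw [h] at h1
    have h2 : phiB n k (j', I') j = (I' j).map (emb n) := by
      rw [phiB, if_neg hne]
    rw [h2] at h1
    exact last_not_mem_map _ h1
  subst hj
  have : I = I' := by
    funext i
    have hi := congrFun h i
    have e1 : phiB n k (j, I) i
        = if i = j then insert (Fin.last n) ((I i).map (emb n))
          else (I i).map (emb n) := rfl
    have e2 : phiB n k (j, I') i
        = if i = j then insert (Fin.last n) ((I' i).map (emb n))
          else (I' i).map (emb n) := rfl
    rw [e1, e2] at hi
    rcases eq_or_ne i j with rfl | hne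
    · rw [if_pos rfl, if_pos rfl] at hi
      have h3 : (insert (Fin.last n) ((I i).map (emb n))).erase (Fin.last n)
          = (insert (Fin.last n) ((I' i).map (emb n))).erase (Fin.last n) := by
        rw [hi]
      rw [Finset.erase_insert (last_not_mem_map _),
        Finset.erase_insert (last_not_mem_map _)] at h3
      exact Finset.map_injective (emb n) h3
    · rw [if_neg hne, if_neg hne] at hi
      exact Finset.map_injective (emb n) hi
  rw [this]

lemma phiB_surj (I' : Fin k → Finset (Fin (n + 1)))
    (hI' : I' ∈ (Parts (n + 1) k).filter (fun I => ¬ ∃ j, I j = {Fin.last n})) :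
    ∃ p : Fin k × (Fin k → Finset (Fin n)),
      p.2 ∈ Parts n k ∧ phiB n k p = I' := by
  rw [Finset.mem_filter] at hI'
  obtain ⟨hP, hnp⟩ := hI'
  obtain ⟨hne, hdisj, hun⟩ := mem_parts.1 hP
  have : (Fin.last n) ∈ Finset.univ.biUnion I' := by
    rw [hun]; exact Finset.mem_univ _
  obtain ⟨j, -, hj⟩ := Finset.mem_biUnion.1 this
  have hnl : ∀ i, i ≠ j → Fin.last n ∉ I' i := by
    intro i hi hmem
    exact (Finset.disjoint_left.1 (hdisj i j hi)) hmem hj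
  set I : Fin k → Finset (Fin n) :=
    fun i => ((I' i).erase (Fin.last n)).preimage (emb n) ((emb n).injective.injOn)
    with hIdef
  have hmap : ∀ i, (I i).map (emb n) = (I' i).erase (Fin.last n) := fun i =>
    map_preimage _ (Finset.notMem_erase _ _)
  have herase : ∀ i, i ≠ j → (I' i).erase (Fin.last n) = I' i := fun i hi =>
    Finset.erase_eq_of_notMem (hnl i hi)
  refine ⟨⟨j, I⟩, mem_parts.2 ⟨?_, ?_, ?_⟩, ?_⟩
  · intro i h
    have h' : I i = ∅ := h
    have hm := hmap i
    rw [h'] at hm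
    simp only [Finset.map_empty] at hm
    rcases eq_or_ne i j with rfl | hi
    · have hsub : I' i ⊆ {Fin.last n} := by
        intro x hx
        rcases eq_or_ne x (Fin.last n) with rfl | hxl
        · exact Finset.mem_singleton_self _
        · exact absurd (Finset.mem_erase.2 ⟨hxl, hx⟩) (by rw [← hm]; simp)
      have : I' i = {Fin.last n} :=
        Finset.Subset.antisymm hsub (Finset.singleton_subset_iff.2 hj)
      exact hnp ⟨i, this⟩
    · rw [herase i hi] at hm
      exact hne i hm.symm
  · intro x y hxy
    have hd := hdisj x y hxy
    rw [Finset.disjoint_left]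
    intro z hzx hzy
    have h1 : (emb n) z ∈ (I' x).erase (Fin.last n) := by
      rw [← hmap x]; exact Finset.mem_map_of_mem _ hzx
    have h2 : (emb n) z ∈ (I' y).erase (Fin.last n) := by
      rw [← hmap y]; exact Finset.mem_map_of_mem _ hzy
    exact (Finset.disjoint_left.1 hd) (Finset.mem_of_mem_erase h1)
      (Finset.mem_of_mem_erase h2)
  · rw [Finset.eq_univ_iff_forall]
    intro y
    have : (Fin.castSucc y) ∈ Finset.univ.biUnion I' := by
      rw [hun]; exact Finset.mem_univ _
    obtain ⟨i, -, hi⟩ := Finset.mem_biUnion.1 this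
    rw [Finset.mem_biUnion]
    refine ⟨i, Finset.mem_univ _, ?_⟩
    rw [hIdef]
    rw [Finset.mem_preimage]
    exact Finset.mem_erase.2 ⟨(Fin.castSucc_lt_last y).ne, hi⟩
  · funext i
    rcases eq_or_ne i j with rfl | hi
    · rw [phiB, if_pos rfl]
      show insert (Fin.last n) ((I i).map (emb n)) = I' i
      rw [hmap i, Finset.insert_erase hj]
    · rw [phiB, if_neg hi]
      show (I i).map (emb n) = I' i
      rw [hmap i, herase i hi]

lemma lemB (D : ℕ) (a : Fin n → ℕ) :
    ∑ I ∈ (Parts (n + 1) k).filter (fun I => ¬ ∃ j, I j = {Fin.last n}),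
      ∑ d ∈ Finset.Nat.antidiagonalTuple k D, ∏ j, base (Fin.snoc a 0) (I j) (d j)
    = ∑ I ∈ Parts n k, ∑ d ∈ Finset.Nat.antidiagonalTuple k D,
        ∑ j, ((2 * (d j : ℚ) + 1 - 2 * ((I j).card : ℚ)) * ∏ i, base a (I i) (d i)) := by
  have step2 : ∀ I : Fin k → Finset (Fin n),
      ∑ d ∈ Finset.Nat.antidiagonalTuple k D,
        ∑ j, ((2 * (d j : ℚ) + 1 - 2 * ((I j).card : ℚ)) * ∏ i, base a (I i) (d i))
      = ∑ j, ∑ d ∈ Finset.Nat.antidiagonalTuple k D,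
          ((2 * (d j : ℚ) + 1 - 2 * ((I j).card : ℚ)) * ∏ i, base a (I i) (d i)) :=
    fun I => Finset.sum_comm
  rw [Finset.sum_congr rfl (fun I _ => step2 I)]
  have step3 : ∑ I ∈ Parts n k, ∑ j : Fin k,
      ∑ d ∈ Finset.Nat.antidiagonalTuple k D,
        ((2 * (d j : ℚ) + 1 - 2 * ((I j).card : ℚ)) * ∏ i, base a (I i) (d i))
      = ∑ p ∈ (Parts n k) ×ˢ (Finset.univ : Finset (Fin k)),
        ∑ d ∈ Finset.Nat.antidiagonalTuple k D,
          ((2 * (d p.2 : ℚ) + 1 - 2 * ((p.1 p.2).card : ℚ)) *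
            ∏ i, base a (p.1 i) (d i)) := by
    rw [Finset.sum_product]
  rw [step3, eq_comm]
  refine Finset.sum_bij (fun p _ => phiB n k (p.2, p.1)) ?_ ?_ ?_ ?_
  · intro p hp
    exact phiB_mem (p.2, p.1) (Finset.mem_product.1 hp).1
  · intro p hp q hq h
    have := phiB_inj (p.2, p.1) (q.2, q.1) (Finset.mem_product.1 hp).1
      (Finset.mem_product.1 hq).1 h
    rw [Prod.ext_iff] at this ⊢
    exact ⟨this.2, this.1⟩
  · intro I' hI'
    obtain ⟨p, hp, hpI⟩ := phiB_surj I' hI'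
    exact ⟨(p.2, p.1), Finset.mem_product.2 ⟨hp, Finset.mem_univ _⟩, hpI⟩
  · intro p hp
    obtain ⟨I, j⟩ := p
    have hI : I ∈ Parts n k := (Finset.mem_product.1 hp).1
    have hnonempty : ∀ i, (I i).Nonempty := fun i =>
      Finset.nonempty_iff_ne_empty.2 ((mem_parts.1 hI).1 i)
    refine Finset.sum_congr rfl fun d _ => ?_
    have hBj : phiB n k (j, I) j = insert (Fin.last n) ((I j).map (emb n)) := by
      rw [phiB, if_pos rfl]
    rw [← Finset.mul_prod_erase Finset.univ
      (fun i => base (Fin.snoc a 0) (phiB n k (j, I) i) (d i)) (Finset.mem_univ j),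
      ← Finset.mul_prod_erase Finset.univ
      (fun i => base a (I i) (d i)) (Finset.mem_univ j)]
    have herase : ∀ i ∈ Finset.univ.erase j,
        base (Fin.snoc a 0) (phiB n k (j, I) i) (d i) = base a (I i) (d i) := by
      intro i hi
      have hij := Finset.ne_of_mem_erase hi
      have : phiB n k (j, I) i = (I i).map (emb n) := by
        rw [phiB, if_neg hij]
      rw [this, base_map]
    rw [Finset.prod_congr rfl herase, hBj, base_insert a (I j) (hnonempty j) (d j)]
    ring

lemma scalar_sum (D : ℕ) {I : Fin k → Finset (Fin n)} (hI : I ∈ Parts n k)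
    {d : Fin k → ℕ} (hd : d ∈ Finset.Nat.antidiagonalTuple k D) :
    ∑ j, (2 * (d j : ℚ) + 1 - 2 * ((I j).card : ℚ))
      = 2 * (D : ℚ) + k - 2 * n := by
  have h1 : ((∑ j, d j : ℕ) : ℚ) = D := by
    rw [Finset.Nat.mem_antidiagonalTuple.1 hd]
  have h2 : ((∑ j, (I j).card : ℕ) : ℚ) = n := by rw [sum_card hI]
  push_cast at h1 h2
  rw [Finset.sum_sub_distrib, Finset.sum_add_distrib, ← Finset.mul_sum,
    ← Finset.mul_sum, h1, h2]
  simp only [Finset.sum_const, Finset.card_univ, Fintype.card_fin, nsmul_eq_mul,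
    mul_one]

def coef (G k : ℕ) : ℚ :=
  (-1 : ℚ) ^ k * (Nat.factorial (2 * G + 1 + k) : ℚ) / (Nat.factorial k : ℚ)

def SS (n D : ℕ) (a : Fin n → ℕ) (k : ℕ) : ℚ :=
  ∑ I ∈ Parts n k, ∑ e ∈ Finset.Nat.antidiagonalTuple k D, ∏ i, base a (I i) (e i)

def AS (n D k : ℕ) (b : Fin (n + 1) → ℕ) : ℚ :=
  ∑ I ∈ (Parts (n + 1) k).filter (fun I => ∃ j, I j = {Fin.last n}),
    ∑ d ∈ Finset.Nat.antidiagonalTuple k D, ∏ j, base b (I j) (d j)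

def BS (n D k : ℕ) (b : Fin (n + 1) → ℕ) : ℚ :=
  ∑ I ∈ (Parts (n + 1) k).filter (fun I => ¬ ∃ j, I j = {Fin.last n}),
    ∑ d ∈ Finset.Nat.antidiagonalTuple k D, ∏ j, base b (I j) (d j)

lemma AS_eq (D : ℕ) (a : Fin n → ℕ) :
    AS n D (k + 1) (Fin.snoc a 0) = ((k : ℚ) + 1) * SS n D a k := by
  unfold AS SS
  rw [lemA]

lemma BS_eq (D : ℕ) (a : Fin n → ℕ) :
    BS n D k (Fin.snoc a 0) = (2 * (D : ℚ) + k - 2 * n) * SS n D a k := by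
  unfold BS SS
  rw [lemB, Finset.mul_sum]
  refine Finset.sum_congr rfl fun I hI => ?_
  rw [Finset.mul_sum]
  refine Finset.sum_congr rfl fun d hd => ?_
  rw [← Finset.sum_mul, scalar_sum D hI hd]

lemma termwise (G n m : ℕ) (X : ℚ) :
    coef G (m + 1) * (((m : ℚ) + 1) * X)
      + coef G m * ((2 * ((G + n + 1 : ℕ) : ℚ) + m - 2 * n) * X) = 0 := by
  unfold coef
  have hf : (Nat.factorial (2 * G + 1 + (m + 1)) : ℚ)
      = (Nat.factorial (2 * G + 1 + m) : ℚ) * (2 * G + 2 + m) := by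
    rw [show 2 * G + 1 + (m + 1) = (2 * G + 1 + m) + 1 from rfl, Nat.factorial_succ]
    push_cast
    ring
  have hm : (Nat.factorial (m + 1) : ℚ) = (Nat.factorial m : ℚ) * (m + 1) := by
    rw [Nat.factorial_succ]
    push_cast
    ring
  rw [hf, hm]
  have h1 : (Nat.factorial m : ℚ) ≠ 0 := Nat.cast_ne_zero.2 (Nat.factorial_ne_zero m)
  have h2 : ((m : ℚ) + 1) ≠ 0 := by positivity
  push_cast
  field_simp
  ring

end S4

theorem statement4' (G n : ℕ) (hn : 1 ≤ n) (a : Fin n → ℕ) :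
    Pgn (G + 2) (n + 1) (Fin.snoc a 0) = 0 := by
  classical
  have hSS0 : S4.SS n (G + n + 1) a 0 = 0 := by
    unfold S4.SS
    rw [S4.parts_n0_empty hn]
    simp
  have hSStop : S4.SS n (G + n + 1) a (n + 1) = 0 := by
    unfold S4.SS
    rw [S4.parts_nk_empty (Nat.lt_succ_self n)]
    simp
  have key : Pgn (G + 2) (n + 1) (Fin.snoc a 0)
      = ∑ k ∈ Finset.Icc 1 (n + 1), S4.coef G k *
          (S4.AS n (G + n + 1) k (Fin.snoc a 0) + S4.BS n (G + n + 1) k (Fin.snoc a 0)) := by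
    have split : ∀ k : ℕ,
        (∑ I ∈ Parts (n + 1) k, ∑ d ∈ Finset.Nat.antidiagonalTuple k (G + n + 1),
          ∏ j, S4.base (Fin.snoc a 0) (I j) (d j))
        = S4.AS n (G + n + 1) k (Fin.snoc a 0) + S4.BS n (G + n + 1) k (Fin.snoc a 0) :=
      fun k => (Finset.sum_filter_add_sum_filter_not _ _ _).symm
    have key0 : Pgn (G + 2) (n + 1) (Fin.snoc a 0)
        = ∑ k ∈ Finset.Icc 1 (n + 1), S4.coef G k *
            ∑ I ∈ Parts (n + 1) k, ∑ d ∈ Finset.Nat.antidiagonalTuple k (G + n + 1),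
              ∏ j, S4.base (Fin.snoc a 0) (I j) (d j) := by
      unfold Pgn S4.coef S4.base
      rw [show (G + 2) - 2 + (n + 1) = G + n + 1 from by omega]
      refine Finset.sum_congr rfl fun k _ => ?_
      rw [show 2 * (G + 2) - 3 + k = 2 * G + 1 + k from by omega]
    rw [key0]
    exact Finset.sum_congr rfl fun k _ => by rw [split k]
  rw [key]
  have expand : ∑ k ∈ Finset.Icc 1 (n + 1), S4.coef G k *
      (S4.AS n (G + n + 1) k (Fin.snoc a 0) + S4.BS n (G + n + 1) k (Fin.snoc a 0))
      = (∑ k ∈ Finset.Icc 1 (n + 1), S4.coef G k * S4.AS n (G + n + 1) k (Fin.snoc a 0))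
        + ∑ k ∈ Finset.Icc 1 (n + 1), S4.coef G k * S4.BS n (G + n + 1) k (Fin.snoc a 0) := by
    rw [← Finset.sum_add_distrib]
    exact Finset.sum_congr rfl fun k _ => by ring
  rw [expand]
  have reindex : ∑ k ∈ Finset.Icc 1 (n + 1), S4.coef G k * S4.AS n (G + n + 1) k (Fin.snoc a 0)
      = ∑ m ∈ Finset.Icc 0 n, S4.coef G (m + 1) * S4.AS n (G + n + 1) (m + 1) (Fin.snoc a 0) := by
    refine Finset.sum_nbij' (fun k => k - 1) (fun m => m + 1) ?_ ?_ ?_ ?_ ?_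
    · intro k hk
      simp only [Finset.mem_Icc] at hk ⊢
      omega
    · intro m hm
      simp only [Finset.mem_Icc] at hm ⊢
      omega
    · intro k hk
      simp only [Finset.mem_Icc] at hk
      show k - 1 + 1 = k
      omega
    · intro m hm
      show m + 1 - 1 = m
      omega
    · intro k hk
      simp only [Finset.mem_Icc] at hk
      show S4.coef G k * S4.AS n (G + n + 1) k (Fin.snoc a 0)
        = S4.coef G (k - 1 + 1) * S4.AS n (G + n + 1) (k - 1 + 1) (Fin.snoc a 0)
      rw [show k - 1 + 1 = k from by omega]
  rw [reindex]
  have icc0 : Finset.Icc 0 n = insert 0 (Finset.Icc 1 n) := by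
    ext x
    simp only [Finset.mem_Icc, Finset.mem_insert]
    omega
  rw [icc0, Finset.sum_insert (by simp)]
  rw [show (0 : ℕ) + 1 = 1 from rfl]
  have hA1 : S4.AS n (G + n + 1) 1 (Fin.snoc a 0) = 0 := by
    have := S4.AS_eq (n := n) (k := 0) (G + n + 1) a
    rw [this, hSS0]
    ring
  rw [hA1, mul_zero, zero_add]
  rw [Finset.sum_Icc_succ_top (Nat.one_le_iff_ne_zero.2 (Nat.succ_ne_zero n))]
  rw [S4.BS_eq, hSStop, mul_zero, mul_zero, add_zero]
  rw [← Finset.sum_add_distrib]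
  have final : ∀ m ∈ Finset.Icc 1 n,
      S4.coef G (m + 1) * S4.AS n (G + n + 1) (m + 1) (Fin.snoc a 0)
        + S4.coef G m * S4.BS n (G + n + 1) m (Fin.snoc a 0) = 0 := by
    intro m hm
    rw [S4.AS_eq, S4.BS_eq]
    exact S4.termwise G n m _
  rw [Finset.sum_congr rfl final, Finset.sum_const_zero]

/-- `P_{g,n+1}(a_1,…,a_n,0) = 0` for arbitrary nonnegative `a_1,…,a_n` (here `n + 1 ≥ 2`). -/
theorem statement4 (g n : ℕ) (hg : 2 ≤ g) (hn : 1 ≤ n) (a : Fin n → ℕ) :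
    Pgn g (n + 1) (Fin.snoc a 0) = 0 := by
  obtain ⟨G, rfl⟩ : ∃ G, g = G + 2 := ⟨g - 2, by omega⟩
  exact statement4' G n hn a
end

section
/- Let g ≥ 2 and n ≥ 1 be integers and let a_1,…,a_n be arbitrary nonnegative integers (no condition on their sum). Then P_{g,n+1}(a_1,…,a_n, 1) − P_{g,n+1}(a_1,…,a_n, 0) = P_{g,n}(a_1,…,a_n) · (4·(a_1+⋯+a_n) − 8g + 10 − 2n). -/
open Finset

variable {n : ℕ}

def toUp (s : Finset (Fin n)) : Finset (Fin (n + 1)) := s.map Fin.castSuccEmb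

def toDown (s : Finset (Fin (n + 1))) : Finset (Fin n) :=
  Finset.univ.filter fun i => i.castSucc ∈ s

lemma mem_toUp {s : Finset (Fin n)} {x : Fin (n + 1)} :
    x ∈ toUp s ↔ ∃ i ∈ s, i.castSucc = x := Finset.mem_map

lemma castSucc_mem_toUp {s : Finset (Fin n)} {i : Fin n} :
    i.castSucc ∈ toUp s ↔ i ∈ s := by
  rw [mem_toUp]
  constructor
  · rintro ⟨j, hj, h⟩; rwa [Fin.castSucc_inj.mp h] at hj
  · exact fun h => ⟨i, h, rfl⟩

lemma mem_toDown {s : Finset (Fin (n + 1))} {i : Fin n} :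
    i ∈ toDown s ↔ i.castSucc ∈ s := by simp [toDown]

lemma last_not_mem_toUp (s : Finset (Fin n)) : Fin.last n ∉ toUp s := by
  rw [mem_toUp]; rintro ⟨i, -, h⟩
  exact Fin.ne_last_of_lt i.castSucc_lt_last h

lemma toDown_toUp (s : Finset (Fin n)) : toDown (toUp s) = s := by
  ext i; rw [mem_toDown, castSucc_mem_toUp]

lemma toUp_toDown {s : Finset (Fin (n + 1))} (h : Fin.last n ∉ s) :
    toUp (toDown s) = s := by
  ext x
  rw [mem_toUp]
  constructor
  · rintro ⟨i, hi, rfl⟩; exact mem_toDown.mp hi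
  · intro hx
    rcases Fin.exists_castSucc_eq.mpr (fun e => h (e ▸ hx)) with ⟨i, rfl⟩
    exact ⟨i, mem_toDown.mpr hx, rfl⟩

lemma toUp_eq_erase_last {s : Finset (Fin (n + 1))} :
    toUp (toDown s) = s.erase (Fin.last n) := by
  ext x
  rw [mem_toUp, Finset.mem_erase]
  constructor
  · rintro ⟨i, hi, rfl⟩
    exact ⟨Fin.ne_last_of_lt i.castSucc_lt_last, mem_toDown.mp hi⟩
  · rintro ⟨hne, hx⟩
    rcases Fin.exists_castSucc_eq.mpr hne with ⟨i, rfl⟩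
    exact ⟨i, mem_toDown.mpr hx, rfl⟩

lemma toUp_injective : Function.Injective (toUp (n := n)) := fun s t h => by
  ext i
  rw [← castSucc_mem_toUp, h, castSucc_mem_toUp]

lemma toUp_empty : toUp (∅ : Finset (Fin n)) = ∅ := rfl

lemma toUp_ne_empty {s : Finset (Fin n)} (h : s ≠ ∅) : toUp s ≠ ∅ := by
  intro e; exact h (toUp_injective (by rw [e, toUp_empty]))

lemma disjoint_toUp {s t : Finset (Fin n)} (h : Disjoint s t) :
    Disjoint (toUp s) (toUp t) := by
  rw [Finset.disjoint_left] at h ⊢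
  rintro x hx hy
  rcases mem_toUp.mp hx with ⟨i, hi, rfl⟩
  exact h hi (castSucc_mem_toUp.mp hy)

lemma disjoint_of_disjoint_toUp {s t : Finset (Fin n)}
    (h : Disjoint (toUp s) (toUp t)) : Disjoint s t := by
  rw [Finset.disjoint_left] at h ⊢
  intro x hx hy
  exact h (castSucc_mem_toUp.mpr hx) (castSucc_mem_toUp.mpr hy)

lemma toUp_card (s : Finset (Fin n)) : (toUp s).card = s.card := Finset.card_map _

lemma toUp_sum (s : Finset (Fin n)) (b : Fin (n + 1) → ℕ) :
    ∑ ℓ ∈ toUp s, b ℓ = ∑ ℓ ∈ s, b ℓ.castSucc := Finset.sum_map _ _ _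

lemma toUp_ne_singleton_last (s : Finset (Fin n)) (hs : s ≠ ∅) :
    toUp s ≠ {Fin.last n} := by
  intro e
  rcases Finset.nonempty_iff_ne_empty.mpr hs with ⟨i, hi⟩
  have : i.castSucc ∈ ({Fin.last n} : Finset (Fin (n+1))) := e ▸ castSucc_mem_toUp.mpr hi
  exact Fin.ne_last_of_lt i.castSucc_lt_last (Finset.mem_singleton.mp this)

lemma mem_Parts {k : ℕ} {I : Fin k → Finset (Fin n)} :
    I ∈ Parts n k ↔ (∀ j, I j ≠ ∅) ∧ (∀ j j', j ≠ j' → Disjoint (I j) (I j')) ∧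
      Finset.univ.biUnion I = Finset.univ := by
  simp [Parts]

lemma biUnion_eq_univ_iff {k : ℕ} {I : Fin k → Finset (Fin n)} :
    Finset.univ.biUnion I = Finset.univ ↔ ∀ x, ∃ j, x ∈ I j := by
  rw [Finset.eq_univ_iff_forall]
  refine forall_congr' fun x => ?_
  simp [Finset.mem_biUnion]

/-- The map attaching a new singleton block `{last}` at position `j⋆`. -/
def amap {m : ℕ} (j' : Fin (m + 1)) (J : Fin m → Finset (Fin n)) :
    Fin (m + 1) → Finset (Fin (n + 1)) :=
  j'.insertNth {Fin.last n} fun i => toUp (J i)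

lemma amap_same {m : ℕ} (j' : Fin (m + 1)) (J : Fin m → Finset (Fin n)) :
    amap j' J j' = {Fin.last n} := Fin.insertNth_apply_same _ _ _

lemma amap_succAbove {m : ℕ} (j' : Fin (m + 1)) (J : Fin m → Finset (Fin n)) (i : Fin m) :
    amap j' J (j'.succAbove i) = toUp (J i) := Fin.insertNth_apply_succAbove _ _ _ _

lemma last_mem_amap_iff {m : ℕ} {j' j : Fin (m + 1)} {J : Fin m → Finset (Fin n)} :
    Fin.last n ∈ amap j' J j ↔ j = j' := by
  refine Fin.succAboveCases j' ?_ ?_ j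
  · simp [amap_same]
  · intro i
    rw [amap_succAbove]
    simp only [iff_false_intro (Fin.succAbove_ne j' i)]
    exact iff_of_false (last_not_mem_toUp _) (by simp [Fin.succAbove_ne j' i])

lemma amap_mem {m : ℕ} (j' : Fin (m + 1)) (J : Fin m → Finset (Fin n))
    (hJ : J ∈ Parts n m) : amap j' J ∈ Parts (n + 1) (m + 1) := by
  obtain ⟨h1, h2, h3⟩ := mem_Parts.mp hJ
  rw [mem_Parts]
  refine ⟨?_, ?_, ?_⟩
  · intro j
    refine Fin.succAboveCases j' ?_ ?_ j
    · rw [amap_same]; simp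
    · intro i; rw [amap_succAbove]; exact toUp_ne_empty (h1 i)
  · intro j j'' hne
    rcases eq_or_ne j j' with rfl | hj
    · rcases Fin.exists_succAbove_eq hne.symm with ⟨i, rfl⟩
      rw [amap_same, amap_succAbove, Finset.disjoint_singleton_left]
      exact last_not_mem_toUp _
    · rcases Fin.exists_succAbove_eq hj with ⟨i, rfl⟩
      rcases eq_or_ne j'' j' with rfl | hj''
      · rw [amap_same, amap_succAbove, Finset.disjoint_singleton_right]
        exact last_not_mem_toUp _
      · rcases Fin.exists_succAbove_eq hj'' with ⟨i', rfl⟩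
        rw [amap_succAbove, amap_succAbove]
        exact disjoint_toUp (h2 i i' fun e => hne (congrArg _ e))
  · rw [biUnion_eq_univ_iff]
    intro x
    rcases eq_or_ne x (Fin.last n) with rfl | hx
    · exact ⟨j', by rw [amap_same]; simp⟩
    · rcases Fin.exists_castSucc_eq.mpr hx with ⟨i, rfl⟩
      rcases biUnion_eq_univ_iff.mp h3 i with ⟨j, hj⟩
      exact ⟨j'.succAbove j, by rw [amap_succAbove]; exact castSucc_mem_toUp.mpr hj⟩

lemma sumA {m : ℕ} (f : (Fin (m + 1) → Finset (Fin (n + 1))) → ℚ) :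
    ∑ I ∈ (Parts (n + 1) (m + 1)).filter (fun I => ∃ j, I j = {Fin.last n}), f I
      = ∑ p ∈ (Finset.univ : Finset (Fin (m + 1))) ×ˢ Parts n m, f (amap p.1 p.2) := by
  refine (Finset.sum_bij (fun p (_ : p ∈ _ ×ˢ Parts n m) => amap p.1 p.2) ?_ ?_ ?_ ?_).symm
  · intro p hp
    rw [Finset.mem_filter]
    exact ⟨amap_mem _ _ (Finset.mem_product.mp hp).2, p.1, amap_same _ _⟩
  · rintro ⟨j1, J1⟩ h1 ⟨j2, J2⟩ h2 heq
    replace heq : amap j1 J1 = amap j2 J2 := heq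
    obtain rfl : j1 = j2 := last_mem_amap_iff.mp
      (by rw [← heq, amap_same]; exact Finset.mem_singleton_self _)
    have hJ : J1 = J2 := by
      funext i
      refine toUp_injective ?_
      rw [← amap_succAbove j1 J1 i, heq, amap_succAbove]
    rw [hJ]
  · intro I' hI'
    rw [Finset.mem_filter] at hI'
    obtain ⟨hP, j₀, hj₀⟩ := hI'
    obtain ⟨h1, h2, h3⟩ := mem_Parts.mp hP
    have hlast : ∀ i : Fin m, Fin.last n ∉ I' (j₀.succAbove i) := fun i hmem =>
      (Finset.disjoint_left.mp (h2 _ _ (Fin.succAbove_ne j₀ i)) hmem)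
        (hj₀ ▸ Finset.mem_singleton_self _)
    refine ⟨(j₀, fun i => toDown (I' (j₀.succAbove i))), ?_, ?_⟩
    · rw [Finset.mem_product]
      refine ⟨Finset.mem_univ _, mem_Parts.mpr ⟨?_, ?_, ?_⟩⟩
      · intro i e
        have e' : toDown (I' (j₀.succAbove i)) = ∅ := e
        exact h1 (j₀.succAbove i) (by rw [← toUp_toDown (hlast i), e', toUp_empty])
      · intro i i' hne
        refine disjoint_of_disjoint_toUp ?_
        rw [toUp_toDown (hlast i), toUp_toDown (hlast i')]
        exact h2 _ _ fun e => hne (Fin.succAbove_right_injective e)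
      · rw [biUnion_eq_univ_iff]
        intro x
        obtain ⟨j, hj⟩ := biUnion_eq_univ_iff.mp h3 x.castSucc
        have hne : j ≠ j₀ := fun e => by
          rw [e, hj₀, Finset.mem_singleton] at hj
          exact Fin.ne_last_of_lt x.castSucc_lt_last hj
        obtain ⟨i, rfl⟩ := Fin.exists_succAbove_eq hne
        exact ⟨i, mem_toDown.mpr hj⟩
    · show amap j₀ (fun i => toDown (I' (j₀.succAbove i))) = I'
      funext j
      refine Fin.succAboveCases j₀ ?_ ?_ j
      · rw [amap_same]; exact hj₀.symm
      · intro i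
        rw [amap_succAbove]
        exact toUp_toDown (hlast i)
  · exact fun p hp => rfl

/-- The map inserting `last` into block `j⋆` of a partition. -/
def bmap {k : ℕ} (j' : Fin k) (J : Fin k → Finset (Fin n)) :
    Fin k → Finset (Fin (n + 1)) :=
  fun j => if j = j' then insert (Fin.last n) (toUp (J j)) else toUp (J j)

lemma bmap_same {k : ℕ} (j' : Fin k) (J : Fin k → Finset (Fin n)) :
    bmap j' J j' = insert (Fin.last n) (toUp (J j')) := if_pos rfl

lemma bmap_ne {k : ℕ} {j j' : Fin k} (J : Fin k → Finset (Fin n)) (h : j ≠ j') :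
    bmap j' J j = toUp (J j) := if_neg h

lemma last_mem_bmap_iff {k : ℕ} {j j' : Fin k} {J : Fin k → Finset (Fin n)} :
    Fin.last n ∈ bmap j' J j ↔ j = j' := by
  rcases eq_or_ne j j' with rfl | h
  · rw [bmap_same]; simp
  · rw [bmap_ne J h]
    exact iff_of_false (last_not_mem_toUp _) h

lemma bmap_mem {k : ℕ} (j' : Fin k) (J : Fin k → Finset (Fin n))
    (hJ : J ∈ Parts n k) : bmap j' J ∈ Parts (n + 1) k := by
  obtain ⟨h1, h2, h3⟩ := mem_Parts.mp hJ
  rw [mem_Parts]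
  refine ⟨?_, ?_, ?_⟩
  · intro j
    rcases eq_or_ne j j' with rfl | h
    · rw [bmap_same]; exact Finset.insert_ne_empty _ _
    · rw [bmap_ne J h]; exact toUp_ne_empty (h1 j)
  · intro j j'' hne
    have base : Disjoint (toUp (J j)) (toUp (J j'')) := disjoint_toUp (h2 _ _ hne)
    rcases eq_or_ne j j' with rfl | h
    · rw [bmap_same, bmap_ne J hne.symm]
      rw [Finset.disjoint_insert_left]
      exact ⟨last_not_mem_toUp _, base⟩
    · rw [bmap_ne J h]
      rcases eq_or_ne j'' j' with rfl | h''
      · rw [bmap_same, Finset.disjoint_insert_right]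
        exact ⟨last_not_mem_toUp _, base⟩
      · rw [bmap_ne J h'']; exact base
  · rw [biUnion_eq_univ_iff]
    intro x
    rcases eq_or_ne x (Fin.last n) with rfl | hx
    · exact ⟨j', by rw [bmap_same]; exact Finset.mem_insert_self _ _⟩
    · rcases Fin.exists_castSucc_eq.mpr hx with ⟨i, rfl⟩
      rcases biUnion_eq_univ_iff.mp h3 i with ⟨j, hj⟩
      refine ⟨j, ?_⟩
      rcases eq_or_ne j j' with rfl | h
      · rw [bmap_same]
        exact Finset.mem_insert_of_mem (castSucc_mem_toUp.mpr hj)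
      · rw [bmap_ne J h]; exact castSucc_mem_toUp.mpr hj

lemma bmap_ne_singleton {k : ℕ} (j' : Fin k) (J : Fin k → Finset (Fin n))
    (hJ : J ∈ Parts n k) (j : Fin k) : bmap j' J j ≠ {Fin.last n} := by
  obtain ⟨h1, _, _⟩ := mem_Parts.mp hJ
  obtain ⟨x, hx⟩ := Finset.nonempty_iff_ne_empty.mpr (h1 j)
  rcases eq_or_ne j j' with rfl | h
  · intro e
    rw [bmap_same] at e
    have : x.castSucc ∈ ({Fin.last n} : Finset (Fin (n+1))) :=
      e ▸ Finset.mem_insert_of_mem (castSucc_mem_toUp.mpr hx)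
    exact Fin.ne_last_of_lt x.castSucc_lt_last (Finset.mem_singleton.mp this)
  · rw [bmap_ne J h]
    exact toUp_ne_singleton_last _ (h1 j)

lemma sumB {k : ℕ} (f : (Fin k → Finset (Fin (n + 1))) → ℚ) :
    ∑ I ∈ (Parts (n + 1) k).filter (fun I => ¬ ∃ j, I j = {Fin.last n}), f I
      = ∑ p ∈ (Finset.univ : Finset (Fin k)) ×ˢ Parts n k, f (bmap p.1 p.2) := by
  refine (Finset.sum_bij (fun p (_ : p ∈ _ ×ˢ Parts n k) => bmap p.1 p.2) ?_ ?_ ?_ ?_).symm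
  · intro p hp
    rw [Finset.mem_filter]
    have hJ := (Finset.mem_product.mp hp).2
    refine ⟨bmap_mem _ _ hJ, ?_⟩
    rintro ⟨j, hj⟩
    exact bmap_ne_singleton p.1 p.2 hJ j hj
  · rintro ⟨j1, J1⟩ h1 ⟨j2, J2⟩ h2 heq
    replace heq : bmap j1 J1 = bmap j2 J2 := heq
    obtain rfl : j1 = j2 := last_mem_bmap_iff.mp
      (by rw [← heq, bmap_same]; exact Finset.mem_insert_self _ _)
    have hJ : J1 = J2 := by
      funext j
      refine toUp_injective ?_
      have happ : bmap j1 J1 j = bmap j1 J2 j := by rw [heq]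
      rcases eq_or_ne j j1 with rfl | h
      · rw [bmap_same, bmap_same] at happ
        have e1 := congrArg (fun s => Finset.erase s (Fin.last n)) happ
        simpa [Finset.erase_insert (last_not_mem_toUp (J1 j)),
          Finset.erase_insert (last_not_mem_toUp (J2 j))] using e1
      · rw [bmap_ne _ h, bmap_ne _ h] at happ
        exact happ
    rw [hJ]
  · intro I' hI'
    rw [Finset.mem_filter] at hI'
    obtain ⟨hP, hno⟩ := hI'
    obtain ⟨h1, h2, h3⟩ := mem_Parts.mp hP
    obtain ⟨j₀, hj₀⟩ := biUnion_eq_univ_iff.mp h3 (Fin.last n)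
    have hlast : ∀ j, j ≠ j₀ → Fin.last n ∉ I' j := fun j hne hmem =>
      (Finset.disjoint_left.mp (h2 _ _ hne) hmem) hj₀
    refine ⟨(j₀, fun j => toDown (I' j)), ?_, ?_⟩
    · rw [Finset.mem_product]
      refine ⟨Finset.mem_univ _, mem_Parts.mpr ⟨?_, ?_, ?_⟩⟩
      · intro j e
        have e' : toDown (I' j) = ∅ := e
        rcases eq_or_ne j j₀ with rfl | h
        · have he : (I' j).erase (Fin.last n) = ∅ := by
            rw [← toUp_eq_erase_last, e', toUp_empty]
          refine hno ⟨j, ?_⟩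
          ext x
          rw [Finset.mem_singleton]
          constructor
          · intro hx
            by_contra hxne
            exact absurd (Finset.mem_erase.mpr ⟨hxne, hx⟩) (he ▸ Finset.notMem_empty x)
          · rintro rfl; exact hj₀
        · exact h1 j (by rw [← toUp_toDown (hlast j h), e', toUp_empty])
      · intro j j'' hne
        rw [Finset.disjoint_left]
        intro x hx hy
        exact Finset.disjoint_left.mp (h2 j j'' hne) (mem_toDown.mp hx) (mem_toDown.mp hy)
      · rw [biUnion_eq_univ_iff]
        intro x
        obtain ⟨j, hj⟩ := biUnion_eq_univ_iff.mp h3 x.castSucc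
        exact ⟨j, mem_toDown.mpr hj⟩
    · show bmap j₀ (fun j => toDown (I' j)) = I'
      funext j
      rcases eq_or_ne j j₀ with rfl | h
      · rw [bmap_same, toUp_eq_erase_last, Finset.insert_erase hj₀]
      · rw [bmap_ne _ h]
        exact toUp_toDown (hlast j h)
  · exact fun p hp => rfl

lemma dfRatio_one (d : ℕ) : dfRatio d 1 = 1 := by simp [dfRatio]

lemma dfRatio_succ (e c : ℕ) (hc : 1 ≤ c) :
    dfRatio (e+1) (c+1) = (2*(e:ℤ)+1) * dfRatio e c := by
  obtain ⟨m, rfl⟩ : ∃ m, c = m + 1 := ⟨c-1, by omega⟩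
  unfold dfRatio
  simp only [Nat.add_sub_cancel]
  rw [Finset.prod_range_succ']
  rw [mul_comm]
  congr 1
  · push_cast; ring
  · exact Finset.prod_congr rfl fun i _ => by push_cast; ring

lemma keyBinom (A e : ℕ) :
    (2*(e:ℚ)+1) * (((2*A+3).choose (2*e+2) : ℚ) - ((2*A+1).choose (2*e+2) : ℚ))
      = (4*(A:ℚ)+3-2*e) * ((2*A+1).choose (2*e) : ℚ) := by
  rcases le_or_gt e A with h | h
  · have hsub : (2*e) ≤ 2*A+1 := by omega
    have p : ((2*A+1).choose (2*e+1) : ℚ) * (2*e+1)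
        = ((2*A+1).choose (2*e) : ℚ) * (2*(A:ℚ)+1-2*e) := by
      have h0 := Nat.choose_succ_right_eq (2*A+1) (2*e)
      have h1 : (((2*A+1).choose (2*e+1) * (2*e+1) : ℕ) : ℚ)
          = (((2*A+1).choose (2*e) * (2*A+1 - 2*e) : ℕ) : ℚ) := by rw [h0]
      push_cast [Nat.cast_sub hsub] at h1
      linarith [h1]
    have e1 : (2*A+3).choose (2*e+2)
        = ((2*A+1).choose (2*e) + (2*A+1).choose (2*e+1))
          + ((2*A+1).choose (2*e+1) + (2*A+1).choose (2*e+2)) := by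
      rw [show 2*A+3 = (2*A+2)+1 by ring, show 2*e+2 = (2*e+1)+1 from rfl,
        Nat.choose_succ_succ (2*A+2) (2*e+1),
        show 2*A+2 = (2*A+1)+1 from rfl, show 2*e+1 = (2*e)+1 from rfl,
        Nat.choose_succ_succ (2*A+1) (2*e), Nat.choose_succ_succ (2*A+1) (2*e+1)]
    have e1q : ((2*A+3).choose (2*e+2) : ℚ)
        = ((2*A+1).choose (2*e) : ℚ) + 2*((2*A+1).choose (2*e+1) : ℚ)
          + ((2*A+1).choose (2*e+2) : ℚ) := by
      rw [e1]; push_cast; ring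
    rw [e1q]
    linarith [p]
  · have z1 : (2*A+1).choose (2*e) = 0 := Nat.choose_eq_zero_of_lt (by omega)
    have z2 : (2*A+1).choose (2*e+2) = 0 := Nat.choose_eq_zero_of_lt (by omega)
    have z3 : (2*A+3).choose (2*e+2) = 0 := Nat.choose_eq_zero_of_lt (by omega)
    simp [z1, z2, z3]

lemma keyStep (A c e : ℕ) (hc : 1 ≤ c) :
    (((2*A+3).choose (2*(e+1)) : ℚ) - ((2*A+1).choose (2*(e+1)) : ℚ))
        * ((dfRatio (e+1) (c+1) : ℤ) : ℚ)
      = (4*(A:ℚ)+3-2*e) * (((2*A+1).choose (2*e) : ℚ) * ((dfRatio e c : ℤ) : ℚ)) := by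
  rw [show 2*(e+1) = 2*e+2 by ring, dfRatio_succ e c hc]
  push_cast
  linear_combination ((dfRatio e c : ℤ) : ℚ) * keyBinom A e

lemma choose31 (d : ℕ) : ((Nat.choose 3 (2*d) : ℚ)) - (Nat.choose 1 (2*d) : ℚ)
    = if d = 1 then 3 else 0 := by
  match d with
  | 0 => simp
  | 1 => norm_num
  | (d+2) =>
    have z1 : Nat.choose 3 (2*(d+2)) = 0 := Nat.choose_eq_zero_of_lt (by omega)
    have z2 : Nat.choose 1 (2*(d+2)) = 0 := Nat.choose_eq_zero_of_lt (by omega)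
    simp [z1, z2]

/-- The factor of a single block. -/
def phi {n : ℕ} (a : Fin n → ℕ) (d : ℕ) (s : Finset (Fin n)) : ℚ :=
  (Nat.choose (2 * (∑ ℓ ∈ s, a ℓ) + 1) (2 * d) : ℚ) * ((dfRatio d s.card : ℤ) : ℚ)

lemma phi_toUp (b : Fin (n + 1) → ℕ) (e : ℕ) (s : Finset (Fin n)) :
    phi b e (toUp s) = phi (fun i => b i.castSucc) e s := by
  unfold phi
  rw [toUp_sum, toUp_card]

lemma snoc_comp (a : Fin n → ℕ) (x : ℕ) :
    (fun i : Fin n => (Fin.snoc a x : Fin (n+1) → ℕ) i.castSucc) = a := by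
  funext i; simp

/-- The inner double sum of `Pgn`. -/
def Spart (N n k : ℕ) (a : Fin n → ℕ) : ℚ :=
  ∑ I ∈ Parts n k, ∑ d ∈ Nat.antidiagonalTuple k N, ∏ j, phi a (d j) (I j)

lemma Parts_sum {k : ℕ} {I : Fin k → Finset (Fin n)} (hI : I ∈ Parts n k)
    (f : Fin n → ℚ) : ∑ j, ∑ ℓ ∈ I j, f ℓ = ∑ ℓ, f ℓ := by
  obtain ⟨h1, h2, h3⟩ := mem_Parts.mp hI
  rw [← h3, Finset.sum_biUnion]
  intro x _ y _ hxy
  exact h2 x y hxy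

lemma Parts_empty_of_lt {k : ℕ} (h : n < k) : Parts n k = ∅ := by
  rw [Finset.eq_empty_iff_forall_notMem]
  intro I hI
  obtain ⟨h1, h2, h3⟩ := mem_Parts.mp hI
  have hcard : (Finset.univ.biUnion I).card = ∑ j, (I j).card :=
    Finset.card_biUnion fun x _ y _ hxy => h2 x y hxy
  rw [h3, Finset.card_univ, Fintype.card_fin] at hcard
  have : ∀ j : Fin k, 1 ≤ (I j).card := fun j =>
    Finset.card_pos.mpr (Finset.nonempty_iff_ne_empty.mpr (h1 j))
  have hk : k ≤ ∑ j, (I j).card := by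
    calc k = ∑ _j : Fin k, 1 := by simp
    _ ≤ _ := Finset.sum_le_sum fun j _ => this j
  omega

lemma Parts_zero_empty (hn : 1 ≤ n) : Parts n 0 = ∅ := by
  rw [Finset.eq_empty_iff_forall_notMem]
  intro I hI
  obtain ⟨-, -, h3⟩ := mem_Parts.mp hI
  have : (⟨0, hn⟩ : Fin n) ∈ Finset.univ.biUnion I := by
    rw [h3]; exact Finset.mem_univ _
  rcases Finset.mem_biUnion.mp this with ⟨j, -, -⟩
  exact j.elim0

lemma Spart_zero (hn : 1 ≤ n) (N : ℕ) (a : Fin n → ℕ) : Spart N n 0 a = 0 := by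
  rw [Spart, Parts_zero_empty hn, Finset.sum_empty]

lemma Spart_top (N : ℕ) (a : Fin n → ℕ) : Spart N n (n + 1) a = 0 := by
  rw [Spart, Parts_empty_of_lt (by omega), Finset.sum_empty]

lemma sumD1 (m N : ℕ) (j : Fin (m + 1)) (P : (Fin m → ℕ) → ℚ) :
    ∑ d ∈ Nat.antidiagonalTuple (m + 1) (N + 1),
      (if d j = 1 then (3 : ℚ) else 0) * P (fun i => d (j.succAbove i))
      = 3 * ∑ e ∈ Nat.antidiagonalTuple m N, P e := by
  rw [Finset.mul_sum]
  rw [show (∑ d ∈ Nat.antidiagonalTuple (m + 1) (N + 1),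
      (if d j = 1 then (3 : ℚ) else 0) * P (fun i => d (j.succAbove i)))
    = ∑ d ∈ (Nat.antidiagonalTuple (m + 1) (N + 1)).filter (fun d => d j = 1),
      3 * P (fun i => d (j.succAbove i)) from by
    rw [Finset.sum_filter]
    exact Finset.sum_congr rfl fun d _ => by split <;> simp]
  refine Finset.sum_nbij' (fun d => fun i => d (j.succAbove i))
    (fun e => j.insertNth 1 e) ?_ ?_ ?_ ?_ ?_
  · intro d hd
    simp only [Finset.mem_filter, Nat.mem_antidiagonalTuple] at hd
    rw [Nat.mem_antidiagonalTuple]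
    show ∑ i : Fin m, d (j.succAbove i) = N
    have := Fin.sum_univ_succAbove d j
    omega
  · intro e he
    rw [Nat.mem_antidiagonalTuple] at he
    simp only [Finset.mem_filter, Nat.mem_antidiagonalTuple]
    constructor
    · rw [Fin.sum_univ_succAbove _ j]
      simp [he, Nat.add_comm]
    · simp
  · intro d hd
    simp only [Finset.mem_filter] at hd
    funext i
    refine Fin.succAboveCases j ?_ ?_ i
    · simp [hd.2]
    · intro i; simp
  · intro e he
    funext i; simp
  · intro d hd
    congr 1

lemma sumD2 (m N : ℕ) (j : Fin (m + 1)) (G : ℕ → ℚ) (hG : G 0 = 0)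
    (P : (Fin m → ℕ) → ℚ) :
    ∑ d ∈ Nat.antidiagonalTuple (m + 1) (N + 1),
      G (d j) * P (fun i => d (j.succAbove i))
      = ∑ d ∈ Nat.antidiagonalTuple (m + 1) N,
        G (d j + 1) * P (fun i => d (j.succAbove i)) := by
  rw [← Finset.sum_filter_of_ne (p := fun d => d j ≠ 0)
    (by intro d _ h hj; exact h (by rw [hj, hG, zero_mul]))]
  refine Finset.sum_nbij' (fun d => Function.update d j (d j - 1))
    (fun e => Function.update e j (e j + 1)) ?_ ?_ ?_ ?_ ?_
  · intro d hd
    simp only [Finset.mem_filter, Nat.mem_antidiagonalTuple] at hd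
    rw [Nat.mem_antidiagonalTuple]
    show ∑ i : Fin (m+1), Function.update d j (d j - 1) i = N
    rw [Fin.sum_univ_succAbove _ j, Function.update_self,
      Finset.sum_congr rfl fun i _ => Function.update_of_ne (Fin.succAbove_ne j i) _ _]
    rw [Fin.sum_univ_succAbove _ j] at hd
    omega
  · intro e he
    rw [Nat.mem_antidiagonalTuple] at he
    simp only [Finset.mem_filter, Nat.mem_antidiagonalTuple]
    constructor
    · show ∑ i : Fin (m+1), Function.update e j (e j + 1) i = N + 1
      rw [Fin.sum_univ_succAbove _ j, Function.update_self,
        Finset.sum_congr rfl fun i _ => Function.update_of_ne (Fin.succAbove_ne j i) _ _]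
      rw [Fin.sum_univ_succAbove _ j] at he
      omega
    · simp
  · intro d hd
    simp only [Finset.mem_filter] at hd
    funext i
    rcases eq_or_ne i j with rfl | h
    · simp only [Function.update_self]
      have := hd.2
      omega
    · simp only [Function.update_of_ne h]
  · intro e he
    funext i
    rcases eq_or_ne i j with rfl | h
    · simp only [Function.update_self]
      omega
    · simp only [Function.update_of_ne h]
  · intro d hd
    simp only [Finset.mem_filter] at hd
    have h1 : Function.update d j (d j - 1) j + 1 = d j := by
      rw [Function.update_self]; omega
    simp only [h1]
    exact congrArg (fun x => G (d j) * P x)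
      (funext fun i => (Function.update_of_ne (Fin.succAbove_ne j i) _ _).symm)

lemma hamap_prod {m : ℕ} (a : Fin n → ℕ) (x : ℕ) (j' : Fin (m + 1))
    (J : Fin m → Finset (Fin n)) (d : Fin (m + 1) → ℕ) :
    (∏ j, phi (Fin.snoc a x) (d j) (amap j' J j))
      = ((2*x+1).choose (2 * d j') : ℚ) * ∏ i, phi a (d (j'.succAbove i)) (J i) := by
  rw [Fin.prod_univ_succAbove _ j']
  congr 1
  · rw [amap_same]
    unfold phi
    rw [Finset.sum_singleton, Finset.card_singleton, dfRatio_one]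
    simp [Fin.snoc_last]
  · refine Finset.prod_congr rfl fun i _ => ?_
    rw [amap_succAbove, phi_toUp, snoc_comp]

lemma hbmap_prod {m : ℕ} (a : Fin n → ℕ) (x : ℕ) (j' : Fin (m + 1))
    (J : Fin (m + 1) → Finset (Fin n)) (d : Fin (m + 1) → ℕ) :
    (∏ j, phi (Fin.snoc a x) (d j) (bmap j' J j))
      = (((2*(x + ∑ ℓ ∈ J j', a ℓ)+1).choose (2 * d j') : ℚ)
          * ((dfRatio (d j') ((J j').card + 1) : ℤ) : ℚ))
        * ∏ i, phi a (d (j'.succAbove i)) (J (j'.succAbove i)) := by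
  rw [Fin.prod_univ_succAbove _ j']
  congr 1
  · rw [bmap_same]
    unfold phi
    have hs : ∑ ℓ ∈ toUp (J j'), (Fin.snoc a x : Fin (n+1) → ℕ) ℓ
        = ∑ ℓ ∈ J j', a ℓ := by
      rw [toUp_sum]
      exact Finset.sum_congr rfl fun ℓ _ => by simp
    rw [Finset.sum_insert (last_not_mem_toUp _),
      Finset.card_insert_of_notMem (last_not_mem_toUp _), hs, toUp_card, Fin.snoc_last]
  · refine Finset.prod_congr rfl fun i _ => ?_
    rw [bmap_ne _ (Fin.succAbove_ne j' i), phi_toUp, snoc_comp]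

lemma deltaT {n : ℕ} (a : Fin n → ℕ) (N m : ℕ) :
    (∑ I ∈ Parts (n+1) (m+1), ∑ d ∈ Nat.antidiagonalTuple (m+1) (N+1),
        ∏ j, phi (Fin.snoc a 1) (d j) (I j))
      - (∑ I ∈ Parts (n+1) (m+1), ∑ d ∈ Nat.antidiagonalTuple (m+1) (N+1),
        ∏ j, phi (Fin.snoc a 0) (d j) (I j))
    = 3 * ((m:ℚ)+1) * Spart N n m a
      + (4 * (∑ ℓ, (a ℓ : ℚ)) + 3 * ((m:ℚ)+1) - 2 * (N:ℚ)) * Spart N n (m+1) a := by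
  have hsplit : ∀ x : ℕ,
      (∑ I ∈ Parts (n+1) (m+1), ∑ d ∈ Nat.antidiagonalTuple (m+1) (N+1),
        ∏ j, phi (Fin.snoc a x) (d j) (I j))
      = (∑ p ∈ (Finset.univ : Finset (Fin (m+1))) ×ˢ Parts n m,
          ∑ d ∈ Nat.antidiagonalTuple (m+1) (N+1),
            ((2*x+1).choose (2 * d p.1) : ℚ) * ∏ i, phi a (d (p.1.succAbove i)) (p.2 i))
        + (∑ p ∈ (Finset.univ : Finset (Fin (m+1))) ×ˢ Parts n (m+1),
          ∑ d ∈ Nat.antidiagonalTuple (m+1) (N+1),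
            (((2*(x + ∑ ℓ ∈ p.2 p.1, a ℓ)+1).choose (2 * d p.1) : ℚ)
              * ((dfRatio (d p.1) ((p.2 p.1).card + 1) : ℤ) : ℚ))
            * ∏ i, phi a (d (p.1.succAbove i)) (p.2 (p.1.succAbove i))) := by
    intro x
    rw [← Finset.sum_filter_add_sum_filter_not (Parts (n+1) (m+1))
      (fun I => ∃ j, I j = {Fin.last n})]
    congr 1
    · rw [sumA]
      exact Finset.sum_congr rfl fun p _ =>
        Finset.sum_congr rfl fun d _ => hamap_prod a x p.1 p.2 d
    · rw [sumB]
      exact Finset.sum_congr rfl fun p _ =>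
        Finset.sum_congr rfl fun d _ => hbmap_prod a x p.1 p.2 d
  rw [hsplit 1, hsplit 0, add_sub_add_comm]
  congr 1
  · -- singleton-block part
    rw [← Finset.sum_sub_distrib]
    have hpt : ∀ p ∈ (Finset.univ : Finset (Fin (m+1))) ×ˢ Parts n m,
        ((∑ d ∈ Nat.antidiagonalTuple (m+1) (N+1),
            ((2*1+1).choose (2 * d p.1) : ℚ) * ∏ i, phi a (d (p.1.succAbove i)) (p.2 i))
          - ∑ d ∈ Nat.antidiagonalTuple (m+1) (N+1),
            ((2*0+1).choose (2 * d p.1) : ℚ) * ∏ i, phi a (d (p.1.succAbove i)) (p.2 i))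
        = 3 * ∑ e ∈ Nat.antidiagonalTuple m N, ∏ i, phi a (e i) (p.2 i) := by
      intro p _
      rw [← Finset.sum_sub_distrib]
      have h1 : ∀ d ∈ Nat.antidiagonalTuple (m+1) (N+1),
          (((2*1+1).choose (2 * d p.1) : ℚ) * ∏ i, phi a (d (p.1.succAbove i)) (p.2 i))
            - ((2*0+1).choose (2 * d p.1) : ℚ) * ∏ i, phi a (d (p.1.succAbove i)) (p.2 i)
          = (if d p.1 = 1 then (3:ℚ) else 0) * ∏ i, phi a (d (p.1.succAbove i)) (p.2 i) := by
        intro d _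
        rw [← sub_mul]
        congr 1
        have := choose31 (d p.1)
        norm_num at this ⊢
        exact this
      rw [Finset.sum_congr rfl h1]
      exact sumD1 m N p.1 (fun e => ∏ i, phi a (e i) (p.2 i))
    rw [Finset.sum_congr rfl hpt]
    have s1 : (∑ p ∈ (Finset.univ : Finset (Fin (m+1))) ×ˢ Parts n m,
          3 * ∑ e ∈ Nat.antidiagonalTuple m N, ∏ i, phi a (e i) (p.2 i))
        = ∑ x : Fin (m+1), ∑ J ∈ Parts n m,
          3 * ∑ e ∈ Nat.antidiagonalTuple m N, ∏ i, phi a (e i) (J i) :=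
      Finset.sum_product _ _ _
    rw [s1]
    have s2 : ∀ x : Fin (m+1), (∑ J ∈ Parts n m,
          3 * ∑ e ∈ Nat.antidiagonalTuple m N, ∏ i, phi a (e i) (J i))
        = 3 * Spart N n m a := by
      intro x
      rw [Spart, Finset.mul_sum]
    rw [Finset.sum_congr rfl fun x _ => s2 x, Finset.sum_const, Finset.card_univ,
      Fintype.card_fin, nsmul_eq_mul]
    push_cast
    ring
  · -- big-block part
    rw [← Finset.sum_sub_distrib]
    have hpt : ∀ p ∈ (Finset.univ : Finset (Fin (m+1))) ×ˢ Parts n (m+1),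
        ((∑ d ∈ Nat.antidiagonalTuple (m+1) (N+1),
            (((2*(1 + ∑ ℓ ∈ p.2 p.1, a ℓ)+1).choose (2 * d p.1) : ℚ)
              * ((dfRatio (d p.1) ((p.2 p.1).card + 1) : ℤ) : ℚ))
            * ∏ i, phi a (d (p.1.succAbove i)) (p.2 (p.1.succAbove i)))
          - ∑ d ∈ Nat.antidiagonalTuple (m+1) (N+1),
            (((2*(0 + ∑ ℓ ∈ p.2 p.1, a ℓ)+1).choose (2 * d p.1) : ℚ)
              * ((dfRatio (d p.1) ((p.2 p.1).card + 1) : ℤ) : ℚ))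
            * ∏ i, phi a (d (p.1.succAbove i)) (p.2 (p.1.succAbove i)))
        = ∑ d ∈ Nat.antidiagonalTuple (m+1) N,
            (4 * (∑ ℓ ∈ p.2 p.1, (a ℓ : ℚ)) + 3 - 2 * (d p.1 : ℚ))
              * ∏ j, phi a (d j) (p.2 j) := by
      intro p hp
      have hJ : p.2 ∈ Parts n (m+1) := (Finset.mem_product.mp hp).2
      have hc : 1 ≤ (p.2 p.1).card :=
        Finset.card_pos.mpr (Finset.nonempty_iff_ne_empty.mpr ((mem_Parts.mp hJ).1 p.1))
      rw [← Finset.sum_sub_distrib]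
      have h1 : ∀ d ∈ Nat.antidiagonalTuple (m+1) (N+1),
          ((((2*(1 + ∑ ℓ ∈ p.2 p.1, a ℓ)+1).choose (2 * d p.1) : ℚ)
              * ((dfRatio (d p.1) ((p.2 p.1).card + 1) : ℤ) : ℚ))
            * ∏ i, phi a (d (p.1.succAbove i)) (p.2 (p.1.succAbove i)))
          - (((2*(0 + ∑ ℓ ∈ p.2 p.1, a ℓ)+1).choose (2 * d p.1) : ℚ)
              * ((dfRatio (d p.1) ((p.2 p.1).card + 1) : ℤ) : ℚ))
            * ∏ i, phi a (d (p.1.succAbove i)) (p.2 (p.1.succAbove i))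
          = ((((2*(∑ ℓ ∈ p.2 p.1, a ℓ)+3).choose (2 * d p.1) : ℚ)
              - ((2*(∑ ℓ ∈ p.2 p.1, a ℓ)+1).choose (2 * d p.1) : ℚ))
              * ((dfRatio (d p.1) ((p.2 p.1).card + 1) : ℤ) : ℚ))
            * ∏ i, phi a (d (p.1.succAbove i)) (p.2 (p.1.succAbove i)) := by
        intro d _
        rw [show 2*(1 + ∑ ℓ ∈ p.2 p.1, a ℓ)+1 = 2*(∑ ℓ ∈ p.2 p.1, a ℓ)+3 by ring,
          show 2*(0 + ∑ ℓ ∈ p.2 p.1, a ℓ)+1 = 2*(∑ ℓ ∈ p.2 p.1, a ℓ)+1 by ring]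
        ring
      rw [Finset.sum_congr rfl h1]
      have hD : (∑ d ∈ Nat.antidiagonalTuple (m+1) (N+1),
          ((((2*(∑ ℓ ∈ p.2 p.1, a ℓ)+3).choose (2 * d p.1) : ℚ)
              - ((2*(∑ ℓ ∈ p.2 p.1, a ℓ)+1).choose (2 * d p.1) : ℚ))
              * ((dfRatio (d p.1) ((p.2 p.1).card + 1) : ℤ) : ℚ))
            * ∏ i, phi a (d (p.1.succAbove i)) (p.2 (p.1.succAbove i)))
          = ∑ d ∈ Nat.antidiagonalTuple (m+1) N,
            ((((2*(∑ ℓ ∈ p.2 p.1, a ℓ)+3).choose (2 * (d p.1 + 1)) : ℚ)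
              - ((2*(∑ ℓ ∈ p.2 p.1, a ℓ)+1).choose (2 * (d p.1 + 1)) : ℚ))
              * ((dfRatio (d p.1 + 1) ((p.2 p.1).card + 1) : ℤ) : ℚ))
            * ∏ i, phi a (d (p.1.succAbove i)) (p.2 (p.1.succAbove i)) :=
        sumD2 m N p.1
          (fun r => (((2*(∑ ℓ ∈ p.2 p.1, a ℓ)+3).choose (2 * r) : ℚ)
              - ((2*(∑ ℓ ∈ p.2 p.1, a ℓ)+1).choose (2 * r) : ℚ))
              * ((dfRatio r ((p.2 p.1).card + 1) : ℤ) : ℚ))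
          (by simp)
          (fun e => ∏ i, phi a (e i) (p.2 (p.1.succAbove i)))
      rw [hD]
      refine Finset.sum_congr rfl fun d _ => ?_
      have hK := keyStep (∑ ℓ ∈ p.2 p.1, a ℓ) (p.2 p.1).card (d p.1) hc
      rw [show 2 * (d p.1 + 1) = 2 * (d p.1) + 2 by ring] at hK ⊢
      rw [hK]
      have hprod : ∏ j, phi a (d j) (p.2 j)
          = phi a (d p.1) (p.2 p.1) * ∏ i, phi a (d (p.1.succAbove i)) (p.2 (p.1.succAbove i)) :=
        Fin.prod_univ_succAbove _ p.1
      rw [hprod]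
      unfold phi
      push_cast
      ring
    rw [Finset.sum_congr rfl hpt]
    have s1 : (∑ p ∈ (Finset.univ : Finset (Fin (m+1))) ×ˢ Parts n (m+1),
          ∑ d ∈ Nat.antidiagonalTuple (m+1) N,
            (4 * (∑ ℓ ∈ p.2 p.1, (a ℓ : ℚ)) + 3 - 2 * (d p.1 : ℚ))
              * ∏ j, phi a (d j) (p.2 j))
        = ∑ x : Fin (m+1), ∑ J ∈ Parts n (m+1),
          ∑ d ∈ Nat.antidiagonalTuple (m+1) N,
            (4 * (∑ ℓ ∈ J x, (a ℓ : ℚ)) + 3 - 2 * (d x : ℚ))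
              * ∏ j, phi a (d j) (J j) :=
      Finset.sum_product _ _ _
    rw [s1, Finset.sum_comm, Spart, Finset.mul_sum]
    refine Finset.sum_congr rfl fun J hJ => ?_
    rw [Finset.sum_comm, Finset.mul_sum]
    refine Finset.sum_congr rfl fun d hd => ?_
    rw [← Finset.sum_mul]
    congr 1
    have h1 : ∑ j' : Fin (m+1), (∑ ℓ ∈ J j', (a ℓ:ℚ)) = ∑ ℓ, (a ℓ:ℚ) := Parts_sum hJ _
    have h2 : ∑ j' : Fin (m+1), (d j' : ℚ) = (N:ℚ) := by
      have := Nat.mem_antidiagonalTuple.mp hd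
      exact_mod_cast congrArg (Nat.cast : ℕ → ℚ) this
    rw [Finset.sum_sub_distrib, Finset.sum_add_distrib, ← Finset.mul_sum, ← Finset.mul_sum,
      h1, h2, Finset.sum_const, Finset.card_univ, Fintype.card_fin, nsmul_eq_mul]
    push_cast
    ring

/-- The outer coefficient of `Pgn`. -/
def cgk (g k : ℕ) : ℚ :=
  (-1) ^ k * (Nat.factorial (2 * g - 3 + k) : ℚ) / (Nat.factorial k : ℚ)

lemma hcoef (g m : ℕ) (hg : 2 ≤ g) :
    cgk g (m+1) * (3*((m:ℚ)+1)) = (-(3*(2*(g:ℚ)-2+m))) * cgk g m := by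
  unfold cgk
  rw [show 2*g - 3 + (m+1) = (2*g-3+m)+1 from rfl, Nat.factorial_succ, Nat.factorial_succ m]
  have h1 : (Nat.factorial m : ℚ) ≠ 0 := Nat.cast_ne_zero.mpr (Nat.factorial_ne_zero m)
  have h2 : ((2*g-3+m : ℕ) : ℚ) = 2*(g:ℚ) - 3 + m := by
    push_cast [Nat.cast_sub (show 3 ≤ 2*g by omega)]
    ring
  push_cast [h2]
  field_simp
  ring

lemma sumIcc (M : ℕ) (f : ℕ → ℚ) :
    ∑ k ∈ Finset.Icc 1 M, f k = ∑ m ∈ Finset.range M, f (m+1) := by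
  rw [← Finset.Ico_add_one_right_eq_Icc, Finset.sum_Ico_eq_sum_range]
  rw [show M + 1 - 1 = M from rfl]
  exact Finset.sum_congr rfl fun i _ => by rw [add_comm]

theorem statement5 (g n : ℕ) (hg : 2 ≤ g) (hn : 1 ≤ n) (a : Fin n → ℕ) :
    Pgn g (n + 1) (Fin.snoc a 1) - Pgn g (n + 1) (Fin.snoc a 0)
      = Pgn g n a * (4 * (∑ j, (a j : ℚ)) - 8 * (g : ℚ) + 10 - 2 * (n : ℚ)) := by
  have hN : ((g - 2 + n : ℕ) : ℚ) = (g : ℚ) + n - 2 := by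
    push_cast [Nat.cast_sub (show 2 ≤ g from hg)]
    ring
  have key : ∀ x : ℕ, Pgn g (n+1) (Fin.snoc a x)
      = ∑ m ∈ Finset.range (n+1), cgk g (m+1) *
          ∑ I ∈ Parts (n+1) (m+1), ∑ d ∈ Nat.antidiagonalTuple (m+1) ((g-2+n)+1),
            ∏ j, phi (Fin.snoc a x) (d j) (I j) := by
    intro x
    have h0 : Pgn g (n+1) (Fin.snoc a x)
        = ∑ k ∈ Finset.Icc 1 (n+1), cgk g k *
            ∑ I ∈ Parts (n+1) k, ∑ d ∈ Nat.antidiagonalTuple k ((g-2+n)+1),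
              ∏ j, phi (Fin.snoc a x) (d j) (I j) := rfl
    rw [h0, sumIcc]
  have hPn : Pgn g n a = ∑ m ∈ Finset.range n, cgk g (m+1) * Spart (g-2+n) n (m+1) a := by
    have h0 : Pgn g n a = ∑ k ∈ Finset.Icc 1 n, cgk g k * Spart (g-2+n) n k a := rfl
    rw [h0, sumIcc]
  rw [key 1, key 0, hPn, ← Finset.sum_sub_distrib]
  have hterm : ∀ m ∈ Finset.range (n+1),
      (cgk g (m+1) *
          ∑ I ∈ Parts (n+1) (m+1), ∑ d ∈ Nat.antidiagonalTuple (m+1) ((g-2+n)+1),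
            ∏ j, phi (Fin.snoc a 1) (d j) (I j))
        - cgk g (m+1) *
          ∑ I ∈ Parts (n+1) (m+1), ∑ d ∈ Nat.antidiagonalTuple (m+1) ((g-2+n)+1),
            ∏ j, phi (Fin.snoc a 0) (d j) (I j)
      = cgk g (m+1) * (3*((m:ℚ)+1)) * Spart (g-2+n) n m a
        + cgk g (m+1) * ((4 * (∑ ℓ, (a ℓ : ℚ)) + 3*((m:ℚ)+1) - 2*((g-2+n : ℕ):ℚ))
            * Spart (g-2+n) n (m+1) a) := by
    intro m _
    rw [← mul_sub, deltaT a (g-2+n) m]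
    ring
  rw [Finset.sum_congr rfl hterm, Finset.sum_add_distrib]
  -- first sum via hcoef
  have hS1 : ∑ m ∈ Finset.range (n+1),
      cgk g (m+1) * (3*((m:ℚ)+1)) * Spart (g-2+n) n m a
      = ∑ m ∈ Finset.range (n+1),
        (-(3*(2*(g:ℚ)-2+m))) * cgk g m * Spart (g-2+n) n m a :=
    Finset.sum_congr rfl fun m _ => by rw [hcoef g m hg]
  -- second sum: telescope
  have hS2 : ∑ m ∈ Finset.range (n+1),
      cgk g (m+1) * ((4 * (∑ ℓ, (a ℓ : ℚ)) + 3*((m:ℚ)+1) - 2*((g-2+n : ℕ):ℚ))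
        * Spart (g-2+n) n (m+1) a)
      = ∑ m ∈ Finset.range (n+1),
        cgk g m * ((4 * (∑ ℓ, (a ℓ : ℚ)) + 3*((m:ℚ)) - 2*((g-2+n : ℕ):ℚ))
          * Spart (g-2+n) n m a) := by
    have hG : ∀ m : ℕ, cgk g (m+1) * ((4 * (∑ ℓ, (a ℓ : ℚ)) + 3*((m:ℚ)+1) - 2*((g-2+n : ℕ):ℚ))
          * Spart (g-2+n) n (m+1) a)
        = (fun t => cgk g t * ((4 * (∑ ℓ, (a ℓ : ℚ)) + 3*((t:ℚ)) - 2*((g-2+n : ℕ):ℚ))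
            * Spart (g-2+n) n t a)) (m+1) := by
      intro m
      simp only []
      push_cast
      ring
    rw [Finset.sum_congr rfl fun m _ => hG m]
    rw [show ∑ m ∈ Finset.range (n+1),
        (fun t => cgk g t * ((4 * (∑ ℓ, (a ℓ : ℚ)) + 3*((t:ℚ)) - 2*((g-2+n : ℕ):ℚ))
            * Spart (g-2+n) n t a)) (m+1)
      = (∑ t ∈ Finset.range (n+2),
          (fun t => cgk g t * ((4 * (∑ ℓ, (a ℓ : ℚ)) + 3*((t:ℚ)) - 2*((g-2+n : ℕ):ℚ))
            * Spart (g-2+n) n t a)) t)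
        - (fun t => cgk g t * ((4 * (∑ ℓ, (a ℓ : ℚ)) + 3*((t:ℚ)) - 2*((g-2+n : ℕ):ℚ))
            * Spart (g-2+n) n t a)) 0 from by
      rw [Finset.sum_range_succ' _ (n+1)]; ring]
    rw [Finset.sum_range_succ]
    simp only []
    rw [Spart_top, Spart_zero hn]
    ring
  rw [hS1, hS2, ← Finset.sum_add_distrib]
  -- compare with RHS
  have hfin : ∀ m ∈ Finset.range (n+1),
      (-(3*(2*(g:ℚ)-2+m))) * cgk g m * Spart (g-2+n) n m a
        + cgk g m * ((4 * (∑ ℓ, (a ℓ : ℚ)) + 3*((m:ℚ)) - 2*((g-2+n : ℕ):ℚ))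
            * Spart (g-2+n) n m a)
      = cgk g m * Spart (g-2+n) n m a
          * (4 * (∑ j, (a j : ℚ)) - 8 * (g : ℚ) + 10 - 2 * (n : ℚ)) := by
    intro m _
    rw [hN]
    ring
  rw [Finset.sum_congr rfl hfin]
  rw [Finset.sum_range_succ' _ n]
  rw [Spart_zero hn]
  rw [Finset.sum_mul]
  simp only [mul_zero, zero_mul, add_zero]
end

section
/- Let g ≥ 2 and n ≥ 1 be integers and let a_1,…,a_n be arbitrary nonnegative integers. Then P_{g,n}(a_1,…,a_n) = ∑_{t=0}^{n} P_{n,t}(a_1,…,a_n). -/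
open Finset

/-- Binomial coefficient with integer lower index: `0` if the lower index is negative. -/
def zbinom (m : ℕ) (r : ℤ) : ℤ :=
  if 0 ≤ r then (m.choose r.toNat : ℤ) else 0

/-- The polynomial `P_{n,t}(a_1,…,a_n)` of the paper (with `g` implicit in the notation there). -/
def Pnt (g n t : ℕ) (a : Fin n → ℕ) : ℚ :=
  ∑ k ∈ Finset.Icc 1 n,
    ((-1) ^ k * (Nat.factorial (2 * g - 3 + k) : ℚ) / (Nat.factorial k : ℚ)) *
      ∑ I ∈ Parts n k,
        ∑ d ∈ Finset.Nat.antidiagonalTuple k (g - 2 + n),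
          ∑ A ∈ Finset.powersetCard (n - t) (Finset.univ : Finset (Fin k)),
            ∏ j, ((zbinom (2 * (∑ ℓ ∈ I j, a ℓ)) (2 * (d j : ℤ) - if j ∈ A then 1 else 0) : ℚ) *
              (dfRatio (d j) (I j).card : ℚ))


lemma pascal (s d : ℕ) : ((2*s+1).choose (2*d) : ℚ) =
    ((zbinom (2*s) (2*(d:ℤ)) : ℤ) : ℚ) + ((zbinom (2*s) (2*(d:ℤ)-1) : ℤ) : ℚ) := by
  unfold zbinom
  cases d with
  | zero => simp
  | succ e =>
    have h1 : (0:ℤ) ≤ 2*(((e:ℕ)+1:ℕ):ℤ) := by positivity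
    have h2 : (0:ℤ) ≤ 2*(((e:ℕ)+1:ℕ):ℤ)-1 := by push_cast; omega
    have t1 : (2*(((e:ℕ)+1:ℕ):ℤ)).toNat = 2*e+2 := by push_cast; omega
    have t2 : (2*(((e:ℕ)+1:ℕ):ℤ)-1).toNat = 2*e+1 := by push_cast; omega
    rw [if_pos h1, if_pos h2, t1, t2]
    have key : (2*s+1).choose (2*(e+1)) = (2*s).choose (2*e+2) + (2*s).choose (2*e+1) := by
      have h := Nat.choose_succ_succ (2*s) (2*e+1)
      have e2 : 2*(e+1) = (2*e+1)+1 := by ring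
      rw [e2, h]; simp only [Nat.succ_eq_add_one]; ring_nf
    rw [key]; push_cast; ring

lemma sumt {k n : ℕ} (hk : k ≤ n) (F : Finset (Fin k) → ℚ) :
    ∑ t ∈ Finset.range (n+1), ∑ A ∈ Finset.powersetCard (n-t) (Finset.univ : Finset (Fin k)), F A
    = ∑ A ∈ (Finset.univ : Finset (Fin k)).powerset, F A := by
  have hrefl := Finset.sum_range_reflect
    (fun m => ∑ A ∈ Finset.powersetCard m (Finset.univ : Finset (Fin k)), F A) (n+1)
  simp only [Nat.add_sub_cancel] at hrefl
  rw [hrefl, Finset.sum_powerset]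
  simp only [Finset.card_univ, Fintype.card_fin]
  symm
  apply Finset.sum_subset (Finset.range_subset_range.mpr (by omega))
  intro m _ hm
  simp only [Finset.mem_range, not_lt] at hm
  rw [Finset.powersetCard_eq_empty.mpr]
  · simp
  · simp only [Finset.card_univ, Fintype.card_fin]; omega

lemma prod_expand {k : ℕ} (p q : Fin k → ℚ) :
    ∏ j, (q j + p j) =
    ∑ A ∈ (Finset.univ : Finset (Fin k)).powerset,
      ∏ j, (if j ∈ A then p j else q j) := by
  rw [show (∏ j, (q j + p j)) = ∏ j, (p j + q j) by simp [add_comm]]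
  rw [Finset.prod_add]
  apply Finset.sum_congr rfl
  intro A hA
  rw [← Finset.prod_sdiff (Finset.mem_powerset.mp hA), mul_comm]
  congr 1
  · exact Finset.prod_congr rfl fun j hj => by
      rw [if_neg (Finset.mem_sdiff.mp hj).2]
  · exact Finset.prod_congr rfl fun j hj => by rw [if_pos hj]


theorem statement7 (g n : ℕ) (hg : 2 ≤ g) (hn : 1 ≤ n) (a : Fin n → ℕ) :
    Pgn g n a = ∑ t ∈ Finset.range (n + 1), Pnt g n t a := by
  unfold Pgn Pnt
  conv_rhs => rw [Finset.sum_comm]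
  apply Finset.sum_congr rfl
  intro k hk
  have hkn : k ≤ n := (Finset.mem_Icc.mp hk).2
  conv_rhs => rw [← Finset.mul_sum]
  congr 1
  conv_rhs => rw [Finset.sum_comm]
  apply Finset.sum_congr rfl
  intro I _
  conv_rhs => rw [Finset.sum_comm]
  apply Finset.sum_congr rfl
  intro d _
  rw [sumt hkn]
  set p : Fin k → ℚ := fun j =>
    ((zbinom (2 * (∑ ℓ ∈ I j, a ℓ)) (2 * (d j : ℤ) - 1) : ℤ) : ℚ) *
      (dfRatio (d j) (I j).card : ℚ) with hp
  set q : Fin k → ℚ := fun j =>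
    ((zbinom (2 * (∑ ℓ ∈ I j, a ℓ)) (2 * (d j : ℤ)) : ℤ) : ℚ) *
      (dfRatio (d j) (I j).card : ℚ) with hq
  have lhs : (∏ j, ((Nat.choose (2 * (∑ ℓ ∈ I j, a ℓ) + 1) (2 * d j) : ℚ) *
      (dfRatio (d j) (I j).card : ℚ))) = ∏ j, (q j + p j) := by
    apply Finset.prod_congr rfl
    intro j _
    rw [pascal (∑ ℓ ∈ I j, a ℓ) (d j), hp, hq]
    push_cast
    ring
  rw [lhs, prod_expand p q]
  apply Finset.sum_congr rfl
  intro A _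
  apply Finset.prod_congr rfl
  intro j _
  by_cases hj : j ∈ A
  · simp [hj, hp]
  · simp [hj, hq]
end

section
/- Let n ≥ 1 be an integer, let S be any integer, and let x be any rational number. Then ∑_{t=0}^{n} (−x)^t · [ (C(n−1,t) − C(n−1,t−1))·(S+t) + 2(t−1)·C(n−1,t−1) ] = (1−x)^{n−1} · ( (S+2−n)·(x+1) + (n−2) ), where C(n−1,−1) := 0. -/
open Finset

lemma zbinom_natCast (m t : ℕ) : zbinom m (t : ℤ) = m.choose t := by
  simp [zbinom]

lemma zbinom_neg_one (m : ℕ) : zbinom m (-1) = 0 := by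
  simp [zbinom]

lemma L1 (m : ℕ) (y : ℚ) :
    ∑ s ∈ Finset.range (m + 1), (m.choose s : ℚ) * y ^ s = (1 + y) ^ m := by
  rw [add_comm 1 y, add_pow]
  refine Finset.sum_congr rfl fun s hs => ?_
  rw [one_pow, mul_one, mul_comm]

lemma L2 (m : ℕ) (y : ℚ) :
    ∑ s ∈ Finset.range (m + 1), (s : ℚ) * (m.choose s : ℚ) * y ^ s
      = m * y * (1 + y) ^ (m - 1) := by
  cases m with
  | zero => simp
  | succ k =>
    rw [Finset.sum_range_succ']
    simp only [Nat.cast_zero, zero_mul, add_zero]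
    have key : ∀ i : ℕ, ((i + 1 : ℕ) : ℚ) * ((k + 1).choose (i + 1) : ℚ)
        = (k + 1) * (k.choose i : ℚ) := by
      intro i
      have h' : ((k + 1) * k.choose i : ℕ) = ((k + 1).choose (i + 1) * (i + 1) : ℕ) :=
        Nat.add_one_mul_choose_eq k i
      have h'' : ((k : ℚ) + 1) * (k.choose i : ℚ)
          = ((k + 1).choose (i + 1) : ℚ) * ((i : ℚ) + 1) := by exact_mod_cast h'
      push_cast
      linarith [h'']
    have : ∑ i ∈ Finset.range (k + 1),
        ((i : ℚ) + 1) * ((k + 1).choose (i + 1) : ℚ) * y ^ (i + 1)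
        = (k + 1) * y * ∑ i ∈ Finset.range (k + 1), (k.choose i : ℚ) * y ^ i := by
      rw [Finset.mul_sum]
      refine Finset.sum_congr rfl fun i hi => ?_
      have hk := key i
      push_cast at hk ⊢
      rw [pow_succ, hk]
      ring
    push_cast at this ⊢
    rw [this, L1]

theorem statement9 (n : ℕ) (hn : 1 ≤ n) (S : ℤ) (x : ℚ) :
    ∑ t ∈ Finset.range (n + 1),
      (-x) ^ t * (((zbinom (n - 1) (t : ℤ) : ℚ) - (zbinom (n - 1) ((t : ℤ) - 1) : ℚ))
          * ((S : ℚ) + t)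
        + 2 * ((t : ℚ) - 1) * (zbinom (n - 1) ((t : ℤ) - 1) : ℚ))
      = (1 - x) ^ (n - 1) * (((S : ℚ) + 2 - n) * (x + 1) + ((n : ℚ) - 2)) := by
  obtain ⟨m, rfl⟩ : ∃ m, n = m + 1 := ⟨n - 1, (Nat.succ_pred_eq_of_pos hn).symm⟩
  simp only [Nat.add_sub_cancel]
  -- split each term into G t + H t
  have split : ∀ t : ℕ,
      (-x) ^ t * (((zbinom m (t : ℤ) : ℚ) - (zbinom m ((t : ℤ) - 1) : ℚ)) * ((S : ℚ) + t)
        + 2 * ((t : ℚ) - 1) * (zbinom m ((t : ℤ) - 1) : ℚ))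
      = (-x) ^ t * (zbinom m (t : ℤ) : ℚ) * ((S : ℚ) + t)
        + (-x) ^ t * (zbinom m ((t : ℤ) - 1) : ℚ) * ((t : ℚ) - 2 - S) := by
    intro t; ring
  rw [Finset.sum_congr rfl fun t _ => split t, Finset.sum_add_distrib]
  -- first sum: drop last (zero) term
  have h1 : ∑ t ∈ Finset.range (m + 1 + 1),
      (-x) ^ t * (zbinom m (t : ℤ) : ℚ) * ((S : ℚ) + t)
      = ∑ t ∈ Finset.range (m + 1), (-x) ^ t * (m.choose t : ℚ) * ((S : ℚ) + t) := by
    simp only [zbinom_natCast, Int.cast_natCast]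
    rw [Finset.sum_range_succ]
    simp [Nat.choose_succ_self]
  -- second sum: drop first (zero) term, reindex
  have h2 : ∑ t ∈ Finset.range (m + 1 + 1),
      (-x) ^ t * (zbinom m ((t : ℤ) - 1) : ℚ) * ((t : ℚ) - 2 - S)
      = ∑ s ∈ Finset.range (m + 1),
          (-x) ^ (s + 1) * (m.choose s : ℚ) * (((s : ℚ) + 1) - 2 - S) := by
    rw [Finset.sum_range_succ']
    have h0 : ((0 : ℕ) : ℤ) - 1 = -1 := by norm_num
    rw [h0, zbinom_neg_one]
    simp only [Int.cast_zero, mul_zero, zero_mul, add_zero]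
    refine Finset.sum_congr rfl fun s _ => ?_
    have hs : ((s + 1 : ℕ) : ℤ) - 1 = (s : ℤ) := by push_cast; ring
    rw [hs, zbinom_natCast, Int.cast_natCast]
    push_cast
    ring
  rw [h1, h2, ← Finset.sum_add_distrib]
  -- combine into one sum
  have h3 : ∀ s : ℕ,
      (-x) ^ s * (m.choose s : ℚ) * ((S : ℚ) + s)
        + (-x) ^ (s + 1) * (m.choose s : ℚ) * (((s : ℚ) + 1) - 2 - S)
      = ((S : ℚ) * (1 + x) + x) * ((m.choose s : ℚ) * (-x) ^ s)
        + (1 - x) * ((s : ℚ) * (m.choose s : ℚ) * (-x) ^ s) := by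
    intro s
    rw [pow_succ]
    ring
  rw [Finset.sum_congr rfl fun s _ => h3 s, Finset.sum_add_distrib,
    ← Finset.mul_sum, ← Finset.mul_sum, L1, L2]
  have hx : (1 + -x) = (1 - x) := by ring
  rw [hx]
  cases m with
  | zero => push_cast; ring
  | succ k =>
    simp only [Nat.add_sub_cancel]
    rw [show (1 - x) ^ (k + 1) = (1 - x) * (1 - x) ^ k from (pow_succ' _ _)]
    push_cast
    ring
end

section
/- Let g ≥ 2 and n ≥ 1 be integers and let a_1,…,a_n be nonnegative integers with a_1+⋯+a_n = 2g−3+n. Then P_{n,0} = (2g−3+n)·A_n. -/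
open Finset

/-- `A_n(a_1,…,a_n)` of the paper. -/
def An (g n : ℕ) (a : Fin n → ℕ) : ℚ :=
  (-1) ^ n * (Nat.factorial (2 * g - 4 + n) : ℚ) *
    ∑ o ∈ (Finset.Nat.antidiagonalTuple n (2 * g - 4 + n)).filter (fun o => ∀ j, Odd (o j)),
      ∏ j, (Nat.choose (2 * a j) (o j) : ℚ)

lemma sum_parts_perm {n : ℕ} {M : Type*} [AddCommMonoid M] (G : (Fin n → Finset (Fin n)) → M) :
    ∑ I ∈ Parts n n, G I = ∑ σ : Equiv.Perm (Fin n), G (fun j => {σ j}) := by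
  refine (Finset.sum_bij (fun σ _ => fun j => ({σ j} : Finset (Fin n))) ?_ ?_ ?_ ?_).symm
  · intro σ _
    simp only [Parts, mem_filter, mem_univ, true_and]
    refine ⟨fun j => by simp, fun j j' h => ?_, ?_⟩
    · rw [Finset.disjoint_singleton]
      exact fun e => h (σ.injective e)
    · ext x
      simp only [mem_biUnion, mem_univ, true_and, mem_singleton, iff_true]
      exact ⟨σ.symm x, by simp⟩
  · intro σ _ τ _ h
    exact Equiv.ext fun j => Finset.singleton_injective (congrFun h j)
  · intro I hI
    simp only [Parts, mem_filter, mem_univ, true_and] at hI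
    obtain ⟨hne, hdisj, hun⟩ := hI
    have h1 : ∀ j, 1 ≤ (I j).card := fun j =>
      Finset.card_pos.mpr (Finset.nonempty_iff_ne_empty.mpr (hne j))
    have hsum : ∑ j, (I j).card = n := by
      rw [← Finset.card_biUnion (fun j _ j' _ h => hdisj j j' h), hun, card_univ, Fintype.card_fin]
    have hcard : ∀ j, (I j).card = 1 := by
      by_contra hc
      push_neg at hc
      obtain ⟨j0, hj0⟩ := hc
      have : ∑ _j : Fin n, 1 < ∑ j, (I j).card :=
        Finset.sum_lt_sum (fun j _ => h1 j) ⟨j0, mem_univ _, by have := h1 j0; omega⟩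
      simp only [Finset.sum_const, card_univ, Fintype.card_fin, smul_eq_mul, mul_one] at this
      omega
    choose f hf using fun j => Finset.card_eq_one.mp (hcard j)
    have hinj : Function.Injective f := by
      intro j j' e
      by_contra h
      have := hdisj j j' h
      rw [hf j, hf j', Finset.disjoint_singleton] at this
      exact this e
    refine ⟨Equiv.ofBijective f (Finite.injective_iff_bijective.mp hinj), mem_univ _, ?_⟩
    funext j
    exact (hf j).symm
  · intro σ _
    rfl

lemma sum_d_eq_sum_o (g n : ℕ) (hg : 2 ≤ g) (m : Fin n → ℕ) :
    ∑ d ∈ Finset.Nat.antidiagonalTuple n (g - 2 + n),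
        ∏ j, ((zbinom (m j) (2 * (d j : ℤ) - 1) : ℚ))
    = ∑ o ∈ (Finset.Nat.antidiagonalTuple n (2 * g - 4 + n)).filter (fun o => ∀ j, Odd (o j)),
        ∏ j, (Nat.choose (m j) (o j) : ℚ) := by
  rw [← Finset.sum_filter_of_ne (p := fun d : Fin n → ℕ => ∀ j, 0 < d j)
    (fun d _ hP j => by
      by_contra h
      push_neg at h
      interval_cases hdj : d j
      refine hP (Finset.prod_eq_zero (Finset.mem_univ j) ?_)
      rw [hdj]
      norm_num [zbinom])]
  refine Finset.sum_nbij' (fun d => fun j => 2 * d j - 1) (fun o => fun j => (o j + 1) / 2)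
    ?_ ?_ ?_ ?_ ?_
  · intro d hd
    simp only [Finset.mem_filter, Finset.Nat.mem_antidiagonalTuple] at hd ⊢
    obtain ⟨hds, hdp⟩ := hd
    constructor
    · have key : ∑ j, (2 * d j - 1) + ∑ _j : Fin n, 1 = ∑ j, 2 * d j := by
        rw [← Finset.sum_add_distrib]
        exact Finset.sum_congr rfl fun j _ => by have := hdp j; omega
      rw [← Finset.mul_sum, hds] at key
      simp only [Finset.sum_const, card_univ, Fintype.card_fin, smul_eq_mul, mul_one] at key
      omega
    · intro j
      exact ⟨d j - 1, by have := hdp j; omega⟩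
  · intro o ho
    simp only [Finset.mem_filter, Finset.Nat.mem_antidiagonalTuple] at ho ⊢
    obtain ⟨hos, hodd⟩ := ho
    constructor
    · have key : ∑ j, 2 * ((o j + 1) / 2) = ∑ j, (o j + 1) := by
        refine Finset.sum_congr rfl fun j _ => ?_
        obtain ⟨c, hc⟩ := hodd j
        omega
      rw [← Finset.mul_sum, Finset.sum_add_distrib] at key
      simp only [Finset.sum_const, card_univ, Fintype.card_fin, smul_eq_mul, mul_one, hos] at key
      omega
    · intro j
      obtain ⟨c, hc⟩ := hodd j
      omega
  · intro d hd
    simp only [Finset.mem_filter] at hd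
    funext j
    show (2 * d j - 1 + 1) / 2 = d j
    have := hd.2 j
    omega
  · intro o ho
    simp only [Finset.mem_filter] at ho
    funext j
    show 2 * ((o j + 1) / 2) - 1 = o j
    obtain ⟨c, hc⟩ := ho.2 j
    omega
  · intro d hd
    simp only [Finset.mem_filter] at hd
    refine Finset.prod_congr rfl fun j _ => ?_
    have hdp := hd.2 j
    have hpos : (0 : ℤ) ≤ 2 * (d j : ℤ) - 1 := by
      have : (1 : ℤ) ≤ (d j : ℤ) := by exact_mod_cast hdp
      omega
    have htn : (2 * (d j : ℤ) - 1).toNat = 2 * d j - 1 := by omega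
    rw [zbinom, if_pos hpos, htn]
    norm_num


lemma perm_reindex {n : ℕ} (a : Fin n → ℕ) (T : Finset (Fin n → ℕ))
    (hT : ∀ o ∈ T, ∀ σ : Equiv.Perm (Fin n), (fun j => o (σ⁻¹ j)) ∈ T)
    (σ : Equiv.Perm (Fin n)) :
    ∑ o ∈ T, ∏ j, (Nat.choose (2 * a (σ j)) (o j) : ℚ)
      = ∑ o ∈ T, ∏ j, (Nat.choose (2 * a j) (o j) : ℚ) := by
  refine Finset.sum_nbij' (fun o => fun j => o (σ⁻¹ j)) (fun o => fun j => o (σ j))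
    (fun o ho => hT o ho σ) (fun o ho => by simpa using hT o ho σ⁻¹) ?_ ?_ ?_
  · intro o _; funext j; simp
  · intro o _; funext j; simp
  · intro o _
    calc ∏ j, (Nat.choose (2 * a (σ j)) (o j) : ℚ)
        = ∏ j, (fun j' => (Nat.choose (2 * a j') (o (σ⁻¹ j')) : ℚ)) (σ j) := by
          refine Finset.prod_congr rfl fun j _ => by simp
      _ = ∏ j, (Nat.choose (2 * a j) (o (σ⁻¹ j)) : ℚ) :=
          Equiv.prod_comp σ (fun j' => (Nat.choose (2 * a j') (o (σ⁻¹ j')) : ℚ))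

theorem statement12 (g n : ℕ) (hg : 2 ≤ g) (hn : 1 ≤ n) (a : Fin n → ℕ)
    (ha : ∑ j, a j = 2 * g - 3 + n) :
    Pnt g n 0 a = (2 * (g : ℚ) - 3 + n) * An g n a := by
  unfold Pnt
  rw [Finset.sum_eq_single_of_mem n (by simp [hn])]; swap
  · intro k hk hkn
    have hk' : k < n := by
      simp only [Finset.mem_Icc] at hk
      omega
    have he : Finset.powersetCard (n - 0) (univ : Finset (Fin k)) = ∅ := by
      rw [Finset.powersetCard_eq_empty, card_univ, Fintype.card_fin]
      omega
    rw [he]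
    simp
  have hps : Finset.powersetCard (n - 0) (univ : Finset (Fin n)) = {univ} := by
    have := Finset.powersetCard_self (univ : Finset (Fin n))
    rwa [card_univ, Fintype.card_fin] at this
  rw [hps]
  simp only [Finset.sum_singleton, Finset.mem_univ, if_pos]
  rw [sum_parts_perm (G := fun I => ∑ d ∈ Finset.Nat.antidiagonalTuple n (g - 2 + n),
        ∏ j, ((zbinom (2 * (∑ ℓ ∈ I j, a ℓ)) (2 * (d j : ℤ) - 1) : ℚ) *
          (dfRatio (d j) (I j).card : ℚ)))]
  have hinner : ∀ σ : Equiv.Perm (Fin n),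
      (∑ d ∈ Finset.Nat.antidiagonalTuple n (g - 2 + n),
        ∏ j, ((zbinom (2 * (∑ ℓ ∈ ({σ j} : Finset (Fin n)), a ℓ)) (2 * (d j : ℤ) - 1) : ℚ) *
          (dfRatio (d j) ({σ j} : Finset (Fin n)).card : ℚ)))
      = ∑ o ∈ (Finset.Nat.antidiagonalTuple n (2 * g - 4 + n)).filter (fun o => ∀ j, Odd (o j)),
          ∏ j, (Nat.choose (2 * a j) (o j) : ℚ) := by
    intro σ
    have h1 : ∀ d : Fin n → ℕ,
        (∏ j, ((zbinom (2 * (∑ ℓ ∈ ({σ j} : Finset (Fin n)), a ℓ)) (2 * (d j : ℤ) - 1) : ℚ) *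
          (dfRatio (d j) ({σ j} : Finset (Fin n)).card : ℚ)))
        = ∏ j, (zbinom (2 * a (σ j)) (2 * (d j : ℤ) - 1) : ℚ) := by
      intro d
      refine Finset.prod_congr rfl fun j _ => ?_
      simp [dfRatio]
    rw [Finset.sum_congr rfl fun d _ => h1 d, sum_d_eq_sum_o g n hg]
    refine perm_reindex a _ ?_ σ
    intro o ho τ
    simp only [Finset.mem_filter, Finset.Nat.mem_antidiagonalTuple] at ho ⊢
    exact ⟨by rw [Equiv.sum_comp τ⁻¹ o]; exact ho.1, fun j => ho.2 (τ⁻¹ j)⟩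
  rw [Finset.sum_congr rfl fun σ _ => hinner σ, Finset.sum_const, card_univ,
    Fintype.card_perm, Fintype.card_fin, nsmul_eq_mul]
  unfold An
  obtain ⟨g', rfl⟩ : ∃ g', g = g' + 2 := ⟨g - 2, by omega⟩
  have e1 : 2 * (g' + 2) - 3 + n = (2 * g' + n + 1) := by omega
  have e2 : 2 * (g' + 2) - 4 + n = 2 * g' + n := by omega
  rw [e1, e2, Nat.factorial_succ]
  have hn0 : ((n.factorial : ℚ)) ≠ 0 := Nat.cast_ne_zero.mpr n.factorial_ne_zero
  push_cast
  field_simp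
  ring
end
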